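/- arXiv:0906.3471 — 11 statements merged into one kernel-verified Lean document; each statement's English description precedes it below -/
import Mathlib

section
/- Let ζ be a primitive n-th root of unity in a field K of characteristic zero, and let G = Σ_{i=0}^{n-1} ζ^{i²} be the classical Gaussian sum, with G' = Σ_{i=0}^{n-1} ζ^{-i²}. If n is odd, then G·G' = n. -/
/-- For an odd positive integer `n` and a primitive `n`-th root of unity `ζ` in a field `K`
of characteristic zero, the classical Gaussian sum `G = Σ ζ^(i²)` and the reciprocal sum
`G' = Σ ζ^(-i²)` satisfy `G·G' = n`. -/
theorem classical_gauss_mul_reciprocal {K : Type*} [Field K] [CharZero K]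
    (n : ℕ) (hn : 0 < n) (hodd : Odd n) (ζ : K) (hζ : IsPrimitiveRoot ζ n) :
    (∑ i ∈ Finset.range n, ζ ^ (i ^ 2)) * (∑ i ∈ Finset.range n, (ζ⁻¹) ^ (i ^ 2)) = (n : K) := by
  haveI : NeZero n := ⟨hn.ne'⟩
  have hζn : ζ ^ n = 1 := hζ.pow_eq_one
  set ψ := AddChar.zmodChar n hζn with hψdef
  have hprim : ψ.IsPrimitive := AddChar.zmodChar_primitive_of_primitive_root n hζ
  -- convert range sums to sums over `ZMod n`
  have key : ∀ f : ZMod n → K, ∑ i ∈ Finset.range n, f (i : ZMod n) = ∑ x : ZMod n, f x := by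
    intro f
    refine Finset.sum_bij' (fun i _ => (i : ZMod n)) (fun x _ => x.val) ?_ ?_ ?_ ?_ ?_
    · intro i hi; exact Finset.mem_univ _
    · intro x hx; exact Finset.mem_range.mpr (ZMod.val_lt x)
    · intro i hi; exact ZMod.val_cast_of_lt (Finset.mem_range.mp hi)
    · intro x hx; exact ZMod.natCast_zmod_val x
    · intro i hi; rfl
  have hψpow : ∀ i : ℕ, ψ ((i : ZMod n) ^ 2) = ζ ^ (i ^ 2) := by
    intro i
    have : ((i : ZMod n) ^ 2) = ((i ^ 2 : ℕ) : ZMod n) := by push_cast; ring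
    rw [this, AddChar.zmodChar_apply' hζn]
  have hG : (∑ i ∈ Finset.range n, ζ ^ (i ^ 2)) = ∑ x : ZMod n, ψ (x ^ 2) := by
    rw [← key fun x => ψ (x ^ 2)]
    exact Finset.sum_congr rfl fun i _ => (hψpow i).symm
  have hG' : (∑ i ∈ Finset.range n, (ζ⁻¹) ^ (i ^ 2)) = ∑ y : ZMod n, ψ (-(y ^ 2)) := by
    rw [← key fun y => ψ (-(y ^ 2))]
    refine Finset.sum_congr rfl fun i _ => ?_
    rw [AddChar.map_neg_eq_inv, hψpow, inv_pow]
  rw [hG, hG', Finset.sum_mul_sum]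
  have step : ∀ y : ZMod n, ∑ x : ZMod n, ψ (x ^ 2) * ψ (-(y ^ 2))
      = ∑ k : ZMod n, ψ ((y + k) ^ 2) * ψ (-(y ^ 2)) := by
    intro y
    exact (Fintype.sum_bijective (fun k => y + k) (AddGroup.addLeft_bijective y) _ _
      fun k => rfl).symm
  rw [Finset.sum_comm]
  calc ∑ y : ZMod n, ∑ x : ZMod n, ψ (x ^ 2) * ψ (-(y ^ 2))
      = ∑ y : ZMod n, ∑ k : ZMod n, ψ ((y + k) ^ 2) * ψ (-(y ^ 2)) :=
        Finset.sum_congr rfl fun y _ => step y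
    _ = ∑ k : ZMod n, ∑ y : ZMod n, ψ (y * (2 * k)) * ψ (k ^ 2) := by
        rw [Finset.sum_comm]
        refine Finset.sum_congr rfl fun k _ => Finset.sum_congr rfl fun y _ => ?_
        rw [← AddChar.map_add_eq_mul, ← AddChar.map_add_eq_mul]
        congr 1
        ring
    _ = ∑ k : ZMod n, (if (2 * k : ZMod n) = 0 then ((Fintype.card (ZMod n) : K)) else 0)
          * ψ (k ^ 2) := by
        refine Finset.sum_congr rfl fun k _ => ?_
        rw [← Finset.sum_mul, AddChar.sum_mulShift _ hprim]
        split_ifs <;> simp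
    _ = (n : K) := by
        have hu : IsUnit (2 : ZMod n) := by
          have : Nat.Coprime 2 n := (Nat.coprime_two_left).mpr hodd
          simpa using (ZMod.isUnit_iff_coprime 2 n).mpr this
        have h2 : ∀ k : ZMod n, ((2 : ZMod n) * k = 0) ↔ k = 0 := fun k =>
          hu.mul_right_eq_zero
        simp only [h2, ZMod.card, ite_mul, zero_mul]
        rw [Finset.sum_ite_eq' Finset.univ (0 : ZMod n) fun k => (n : K) * ψ (k ^ 2)]
        simp
end

section
/- Let ζ be a primitive n-th root of unity in a field K of characteristic zero with n odd. Then the classical Gaussian sum G = Σ_{i=0}^{n-1} ζ^{i²} satisfies G² = n if n ≡ 1 (mod 4) and G² = -n if n ≡ 3 (mod 4). -/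
open Finset

namespace ClassicalGauss

/-- Reindexing a sum over `range (a*b)` by div/mod. -/
lemma sum_range_mul_eq {M : Type*} [AddCommMonoid M] (f : ℕ → M) (a b : ℕ) :
    ∑ i ∈ Finset.range (a * b), f i
      = ∑ u ∈ Finset.range a, ∑ v ∈ Finset.range b, f (u + a * v) := by
  rw [← Finset.sum_product']
  refine Finset.sum_nbij' (fun i => (i % a, i / a)) (fun p => p.1 + a * p.2) ?_ ?_ ?_ ?_ ?_
  · intro x hx
    simp only [Finset.mem_range] at hx
    have ha : 0 < a := by
      rcases Nat.eq_zero_or_pos a with h | h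
      · rw [h, zero_mul] at hx; omega
      · exact h
    simp only [Finset.mem_product, Finset.mem_range]
    exact ⟨Nat.mod_lt x ha, (Nat.div_lt_iff_lt_mul ha).mpr (by rwa [Nat.mul_comm] at hx)⟩
  · rintro ⟨u, v⟩ hp
    simp only [Finset.mem_product, Finset.mem_range] at hp
    obtain ⟨hu, hv⟩ := hp
    simp only [Finset.mem_range]
    have h1 : a * (v + 1) ≤ a * b := Nat.mul_le_mul_left a (by omega)
    have h2 : a * (v + 1) = a + a * v := by ring
    omega
  · intro x _
    exact Nat.mod_add_div x a
  · rintro ⟨u, v⟩ hp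
    simp only [Finset.mem_product, Finset.mem_range] at hp
    obtain ⟨hu, hv⟩ := hp
    have ha : 0 < a := by omega
    have h1 : (u + a * v) % a = u := by
      rw [Nat.add_mul_mod_self_left, Nat.mod_eq_of_lt hu]
    have h2 : (u + a * v) / a = v := by
      rw [Nat.add_mul_div_left u v ha, Nat.div_eq_of_lt hu]; omega
    simp [h1, h2]
  · intro x _
    exact congrArg f (Nat.mod_add_div x a).symm

variable {K : Type*} [Field K] [CharZero K]

lemma zeta_pow_congr {n : ℕ} {ζ : K} (h1 : ζ ^ n = 1) {c d : ℕ} (h : c ≡ d [MOD n]) :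
    ζ ^ c = ζ ^ d := by
  rw [pow_eq_pow_mod c h1, pow_eq_pow_mod d h1, h]

/-- Geometric sum over a full period of a primitive root. -/
lemma geom_sum_prim {p : ℕ} (hp : 0 < p) {ω : K} (hω : IsPrimitiveRoot ω p) (c : ℕ) :
    ∑ v ∈ Finset.range p, ω ^ (c * v) = if p ∣ c then (p : K) else 0 := by
  by_cases h : p ∣ c
  · rw [if_pos h]
    have : ∀ v ∈ Finset.range p, ω ^ (c * v) = 1 := by
      intro v _
      exact (hω.pow_eq_one_iff_dvd _).mpr (Dvd.dvd.mul_right h v)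
    rw [Finset.sum_congr rfl this]
    simp
  · rw [if_neg h]
    have hx1 : ω ^ c ≠ 1 := fun hc => h ((hω.pow_eq_one_iff_dvd c).mp hc)
    have hxp : (ω ^ c) ^ p = 1 := by
      rw [← pow_mul, mul_comm, pow_mul, hω.pow_eq_one, one_pow]
    have hgeom := geom_sum_mul (ω ^ c) p
    rw [hxp, sub_self] at hgeom
    rcases mul_eq_zero.mp hgeom with h0 | h0
    · calc ∑ v ∈ Finset.range p, ω ^ (c * v)
          = ∑ v ∈ Finset.range p, (ω ^ c) ^ v := by
            refine Finset.sum_congr rfl fun v _ => ?_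
            rw [← pow_mul]
      _ = 0 := h0
    · exact absurd (sub_eq_zero.mp h0) hx1

/-- The sign `ε n = ±1` according to `n % 4`. -/
noncomputable def eps (n : ℕ) : K := if n % 4 = 1 then 1 else -1

lemma eps_mul {a b : ℕ} (ha : Odd a) (hb : Odd b) :
    (eps (a * b) : K) = eps a * eps b := by
  have ha2 := Nat.odd_iff.mp ha
  have hb2 := Nat.odd_iff.mp hb
  have ha4 : a % 4 = 1 ∨ a % 4 = 3 := by omega
  have hb4 : b % 4 = 1 ∨ b % 4 = 3 := by omega
  have hab : (a * b) % 4 = (a % 4) * (b % 4) % 4 := by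
    rw [Nat.mul_mod]
  unfold eps
  rcases ha4 with h1 | h1 <;> rcases hb4 with h2 | h2 <;>
    rw [h1, h2] at hab <;> norm_num at hab <;> simp [h1, h2, hab]

/-- Prime case, via Mathlib's Gauss sum machinery. -/
lemma gauss_prime (p : ℕ) (hp : p.Prime) (hp2 : p ≠ 2) (ζ : K)
    (hζ : IsPrimitiveRoot ζ p) :
    (∑ i ∈ Finset.range p, ζ ^ (i ^ 2)) ^ 2 = (eps p : K) * p := by
  haveI : Fact p.Prime := ⟨hp⟩
  haveI : NeZero p := ⟨hp.ne_zero⟩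
  have hζ1 : ζ ^ p = 1 := hζ.pow_eq_one
  set ψ : AddChar (ZMod p) K := AddChar.zmodChar p hζ1 with hψdef
  have hψ : ψ.IsPrimitive := AddChar.zmodChar_primitive_of_primitive_root p hζ
  set χ : MulChar (ZMod p) K :=
    (quadraticChar (ZMod p)).ringHomComp (Int.castRingHom K) with hχdef
  have hring : ringChar (ZMod p) ≠ 2 := by
    rw [ZMod.ringChar_zmod_n]; exact hp2
  have hχapp : ∀ b : ZMod p, χ b = ((quadraticChar (ZMod p) b : ℤ) : K) := fun b => rfl
  have hχ1 : χ ≠ 1 := by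
    obtain ⟨a, ha⟩ := quadraticChar_exists_neg_one hring
    have ha0 : a ≠ 0 := by
      intro h
      rw [h] at ha
      simp at ha
    intro hcontr
    have h1 : χ a = 1 := by
      rw [hcontr]
      exact MulChar.one_apply (Ne.isUnit ha0)
    rw [hχapp, ha] at h1
    norm_num at h1
  have hχ2 : χ.IsQuadratic := (quadraticChar_isQuadratic (ZMod p)).comp _
  have key : gaussSum χ ψ ^ 2 = χ (-1) * (Fintype.card (ZMod p) : K) :=
    gaussSum_sq hχ1 hχ2 hψ
  -- classical sum equals the Gauss sum
  have step1 : ∑ i ∈ Finset.range p, ζ ^ (i ^ 2) = ∑ x : ZMod p, ψ (x ^ 2) := by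
    refine Finset.sum_nbij' (fun i => ((i : ZMod p))) (fun x => x.val) ?_ ?_ ?_ ?_ ?_
    · intro i _; exact Finset.mem_univ _
    · intro x _; exact Finset.mem_range.mpr (ZMod.val_lt x)
    · intro i hi
      exact ZMod.val_natCast_of_lt (Finset.mem_range.mp hi)
    · intro x _
      exact ZMod.natCast_zmod_val x
    · intro i _
      have : ((i : ZMod p)) ^ 2 = ((i ^ 2 : ℕ) : ZMod p) := by push_cast; ring
      rw [this, AddChar.zmodChar_apply' hζ1]
  have hψ_ne : ψ ≠ 1 := by
    intro h
    have h1 : ψ 1 = 1 := by rw [h]; rfl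
    have h2 : ψ 1 = ζ := by
      rw [hψdef, AddChar.zmodChar_apply, ZMod.val_one p]
      · exact pow_one ζ
    rw [h2] at h1
    exact (hζ.ne_one hp.one_lt) h1
  have step2 : ∑ x : ZMod p, ψ (x ^ 2) = gaussSum χ ψ := by
    classical
    have fib : ∑ x : ZMod p, ψ (x ^ 2)
        = ∑ b : ZMod p, ∑ x ∈ Finset.univ.filter (fun x : ZMod p => x ^ 2 = b), ψ (x ^ 2) :=
      (Finset.sum_fiberwise Finset.univ (fun x => x ^ 2) (fun x => ψ (x ^ 2))).symm
    rw [fib]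
    have inner : ∀ b : ZMod p,
        ∑ x ∈ Finset.univ.filter (fun x : ZMod p => x ^ 2 = b), ψ (x ^ 2)
          = (((quadraticChar (ZMod p) b : ℤ) : K) + 1) * ψ b := by
      intro b
      have hcard := quadraticChar_card_sqrts hring b
      have hfin : ({x : ZMod p | x ^ 2 = b}).toFinset
          = Finset.univ.filter (fun x : ZMod p => x ^ 2 = b) := by
        ext x; simp
      rw [hfin] at hcard
      calc ∑ x ∈ Finset.univ.filter (fun x : ZMod p => x ^ 2 = b), ψ (x ^ 2)
          = ∑ x ∈ Finset.univ.filter (fun x : ZMod p => x ^ 2 = b), ψ b := by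
            refine Finset.sum_congr rfl fun x hx => ?_
            rw [(Finset.mem_filter.mp hx).2]
        _ = ((Finset.univ.filter (fun x : ZMod p => x ^ 2 = b)).card : K) * ψ b := by
            rw [Finset.sum_const, nsmul_eq_mul]
        _ = (((quadraticChar (ZMod p) b : ℤ) : K) + 1) * ψ b := by
            congr 1
            have : ((Finset.univ.filter (fun x : ZMod p => x ^ 2 = b)).card : ℤ)
                = quadraticChar (ZMod p) b + 1 := hcard
            exact_mod_cast congrArg (fun z : ℤ => (z : K)) this
    rw [Finset.sum_congr rfl (fun b _ => inner b)]
    have expand : ∀ b : ZMod p,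
        (((quadraticChar (ZMod p) b : ℤ) : K) + 1) * ψ b = χ b * ψ b + ψ b := by
      intro b; rw [hχapp]; ring
    rw [Finset.sum_congr rfl (fun b _ => expand b), Finset.sum_add_distrib,
      AddChar.sum_eq_zero_of_ne_one hψ_ne, add_zero]
    rfl
  rw [step1, step2, key]
  congr 1
  · rw [hχapp, quadraticChar_neg_one hring, ZMod.card]
    have hp2' : p % 2 = 1 := Nat.odd_iff.mp (hp.odd_of_ne_two hp2)
    rw [ZMod.χ₄_nat_eq_if_mod_four, if_neg (by omega)]
    unfold eps
    split_ifs <;> norm_num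
  · rw [ZMod.card]

/-- Prime power reduction: the Gauss sum for `p^k` (`k ≥ 2`) reduces to `p^(k-2)`. -/
lemma gauss_pp (p k : ℕ) (hp : p.Prime) (hp2 : p ≠ 2) (hk : 2 ≤ k) (ζ : K)
    (hζ : IsPrimitiveRoot ζ (p ^ k)) :
    ∑ i ∈ Finset.range (p ^ k), ζ ^ (i ^ 2)
      = (p : K) * ∑ j ∈ Finset.range (p ^ (k - 2)), (ζ ^ (p ^ 2)) ^ (j ^ 2) := by
  have hppos := hp.pos
  have hz1 : ζ ^ (p ^ k) = 1 := hζ.pow_eq_one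
  have hsplit1 : p ^ k = p ^ (k - 1) * p := by
    rw [← pow_succ]; congr 1; omega
  have hω : IsPrimitiveRoot (ζ ^ (p ^ (k - 1))) p :=
    hζ.pow (pow_pos hppos k) hsplit1
  rw [hsplit1, sum_range_mul_eq]
  have hterm : ∀ u ∈ Finset.range (p ^ (k - 1)), ∀ v ∈ Finset.range p,
      ζ ^ ((u + p ^ (k - 1) * v) ^ 2) = ζ ^ (u ^ 2) * (ζ ^ (p ^ (k - 1))) ^ ((2 * u) * v) := by
    intro u _ v _
    have h1 : p ^ (k - 1) * p ^ (k - 1) = p ^ k * p ^ (k - 2) := by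
      rw [← pow_add, ← pow_add]; congr 1; omega
    have hexp : (u + p ^ (k - 1) * v) ^ 2
        = u ^ 2 + p ^ (k - 1) * ((2 * u) * v) + p ^ k * (p ^ (k - 2) * v ^ 2) := by
      calc (u + p ^ (k - 1) * v) ^ 2
          = u ^ 2 + p ^ (k - 1) * ((2 * u) * v) + (p ^ (k - 1) * p ^ (k - 1)) * v ^ 2 := by
            ring
        _ = u ^ 2 + p ^ (k - 1) * ((2 * u) * v) + p ^ k * (p ^ (k - 2) * v ^ 2) := by
            rw [h1]; ring
    rw [hexp, pow_add, pow_add, pow_mul ζ (p ^ k), hz1, one_pow, mul_one, pow_mul]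
  calc ∑ u ∈ Finset.range (p ^ (k - 1)), ∑ v ∈ Finset.range p,
        ζ ^ ((u + p ^ (k - 1) * v) ^ 2)
      = ∑ u ∈ Finset.range (p ^ (k - 1)),
          ζ ^ (u ^ 2) * (if p ∣ 2 * u then (p : K) else 0) := by
        refine Finset.sum_congr rfl fun u hu => ?_
        rw [Finset.sum_congr rfl (hterm u hu), ← Finset.mul_sum]
        congr 1
        exact geom_sum_prim hppos hω (2 * u)
    _ = ∑ u ∈ Finset.range (p ^ (k - 1)),
          (if p ∣ u then ζ ^ (u ^ 2) * (p : K) else 0) := by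
        refine Finset.sum_congr rfl fun u _ => ?_
        have hiff : p ∣ 2 * u ↔ p ∣ u := by
          constructor
          · intro h
            rcases (Nat.Prime.dvd_mul hp).mp h with h2 | h2
            · exact absurd ((Nat.prime_dvd_prime_iff_eq hp Nat.prime_two).mp h2) hp2
            · exact h2
          · intro h; exact Dvd.dvd.mul_left h 2
        rw [mul_ite, mul_zero]
        simp only [hiff]
    _ = (p : K) * ∑ j ∈ Finset.range (p ^ (k - 2)), (ζ ^ (p ^ 2)) ^ (j ^ 2) := by
        have hsplit2 : p ^ (k - 1) = p * p ^ (k - 2) := by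
          rw [← pow_succ']; congr 1; omega
        rw [hsplit2, sum_range_mul_eq]
        have houter : ∀ r ∈ Finset.range p,
            (∑ s ∈ Finset.range (p ^ (k - 2)),
              (if p ∣ r + p * s then ζ ^ ((r + p * s) ^ 2) * (p : K) else 0))
            = if r = 0 then ∑ s ∈ Finset.range (p ^ (k - 2)), ζ ^ ((p * s) ^ 2) * (p : K)
              else 0 := by
          intro r hr
          by_cases hr0 : r = 0
          · rw [if_pos hr0, hr0]
            refine Finset.sum_congr rfl fun s _ => ?_
            rw [Nat.zero_add, if_pos (Dvd.intro s rfl)]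
          · rw [if_neg hr0]
            refine Finset.sum_eq_zero fun s _ => ?_
            rw [if_neg]
            intro hdvd
            have hrlt : r < p := Finset.mem_range.mp hr
            have hdr : p ∣ r :=
              (Nat.dvd_add_right ⟨s, rfl⟩).mp (by rwa [Nat.add_comm] at hdvd)
            exact hr0 (Nat.eq_zero_of_dvd_of_lt hdr hrlt)
        rw [Finset.sum_congr rfl houter, Finset.sum_ite_eq' (Finset.range p) 0]
        rw [if_pos (Finset.mem_range.mpr hppos), ← Finset.sum_mul, mul_comm]
        congr 1
        refine Finset.sum_congr rfl fun s _ => ?_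
        rw [← pow_mul]
        congr 1
        ring

/-- Coprime splitting of the classical Gauss sum (Chinese remainder). -/
lemma gauss_split (a b : ℕ) (ha : 0 < a) (hb : 0 < b) (hab : a.Coprime b) (ζ : K)
    (hζ : IsPrimitiveRoot ζ (a * b)) :
    ∑ i ∈ Finset.range (a * b), ζ ^ (i ^ 2)
      = (∑ x ∈ Finset.range a, (ζ ^ (b ^ 2)) ^ (x ^ 2))
        * (∑ y ∈ Finset.range b, (ζ ^ (a ^ 2)) ^ (y ^ 2)) := by
  have hn : 0 < a * b := Nat.mul_pos ha hb
  have hz1 : ζ ^ (a * b) = 1 := hζ.pow_eq_one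
  rw [Finset.sum_mul_sum, ← Finset.sum_product']
  symm
  set F : ℕ × ℕ → ℕ := fun q => (b * q.1 + a * q.2) % (a * b) with hF
  have hmem : ∀ q ∈ Finset.range a ×ˢ Finset.range b, F q ∈ Finset.range (a * b) :=
    fun q _ => Finset.mem_range.mpr (Nat.mod_lt _ hn)
  have hinj : Set.InjOn F ↑(Finset.range a ×ˢ Finset.range b) := by
    rintro ⟨x, y⟩ hxy ⟨x', y'⟩ hxy' heq
    simp only [Finset.coe_product, Set.mem_prod, Finset.mem_coe, Finset.mem_range] at hxy hxy'
    obtain ⟨hx, hy⟩ := hxy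
    obtain ⟨hx', hy'⟩ := hxy'
    have hmeq : b * x + a * y ≡ b * x' + a * y' [MOD a * b] := heq
    have hma : b * x + a * y ≡ b * x' + a * y' [MOD a] := hmeq.of_dvd ⟨b, rfl⟩
    have hmb : b * x + a * y ≡ b * x' + a * y' [MOD b] := hmeq.of_dvd ⟨a, Nat.mul_comm a b⟩
    have h0a : a * y ≡ a * y' [MOD a] :=
      (Nat.modEq_zero_iff_dvd.mpr ⟨y, rfl⟩).trans (Nat.modEq_zero_iff_dvd.mpr ⟨y', rfl⟩).symm
    have h0b : b * x ≡ b * x' [MOD b] :=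
      (Nat.modEq_zero_iff_dvd.mpr ⟨x, rfl⟩).trans (Nat.modEq_zero_iff_dvd.mpr ⟨x', rfl⟩).symm
    have hxx : b * x ≡ b * x' [MOD a] := Nat.ModEq.add_right_cancel h0a hma
    have hyy : a * y ≡ a * y' [MOD b] := Nat.ModEq.add_left_cancel h0b hmb
    have hxeq : x = x' := by
      have h := Nat.ModEq.cancel_left_of_coprime hab hxx
      have h2 : x % a = x' % a := h
      rwa [Nat.mod_eq_of_lt hx, Nat.mod_eq_of_lt hx'] at h2
    have hyeq : y = y' := by
      have h := Nat.ModEq.cancel_left_of_coprime hab.symm hyy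
      have h2 : y % b = y' % b := h
      rwa [Nat.mod_eq_of_lt hy, Nat.mod_eq_of_lt hy'] at h2
    simp [hxeq, hyeq]
  have himg : (Finset.range a ×ˢ Finset.range b).image F = Finset.range (a * b) := by
    apply Finset.eq_of_subset_of_card_le
    · intro z hz
      obtain ⟨q, hq, rfl⟩ := Finset.mem_image.mp hz
      exact hmem q hq
    · rw [Finset.card_image_of_injOn hinj, Finset.card_product, Finset.card_range,
        Finset.card_range, Finset.card_range]
  have hsurj : Set.SurjOn F ↑(Finset.range a ×ˢ Finset.range b) ↑(Finset.range (a * b)) := by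
    rw [Set.SurjOn, ← Finset.coe_image, himg]
  refine Finset.sum_nbij F hmem hinj hsurj ?_
  rintro ⟨x, y⟩ _
  have e1 : ((b * x + a * y) % (a * b)) ^ 2 ≡ (b * x + a * y) ^ 2 [MOD a * b] :=
    (Nat.mod_modEq _ _).pow 2
  have e2 : (b * x + a * y) ^ 2 % (a * b) = (b ^ 2 * x ^ 2 + a ^ 2 * y ^ 2) % (a * b) := by
    rw [show (b * x + a * y) ^ 2 = b ^ 2 * x ^ 2 + a ^ 2 * y ^ 2 + (a * b) * (2 * (x * y)) by
      ring, Nat.add_mul_mod_self_left]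
  have hcong : ζ ^ (((b * x + a * y) % (a * b)) ^ 2) = ζ ^ (b ^ 2 * x ^ 2 + a ^ 2 * y ^ 2) :=
    zeta_pow_congr hz1 (e1.trans e2)
  show (ζ ^ (b ^ 2)) ^ (x ^ 2) * (ζ ^ (a ^ 2)) ^ (y ^ 2)
      = ζ ^ (((b * x + a * y) % (a * b)) ^ 2)
  rw [← pow_mul, ← pow_mul, ← pow_add]
  exact hcong.symm

/-- Main auxiliary result, by strong induction. -/
lemma gauss_aux : ∀ n : ℕ, 0 < n → Odd n → ∀ ζ : K, IsPrimitiveRoot ζ n →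
    (∑ i ∈ Finset.range n, ζ ^ (i ^ 2)) ^ 2 = (eps n : K) * n := by
  intro n
  induction n using Nat.strong_induction_on with
  | _ n IH =>
    intro hn ho ζ hζ
    by_cases hn1 : n = 1
    · subst hn1
      norm_num [eps, Finset.sum_range_one]
    · have h1 : 1 < n := by omega
      set p := n.minFac with hpdef
      have hp : p.Prime := Nat.minFac_prime hn1
      have hpn : p ∣ n := Nat.minFac_dvd n
      have hno : n % 2 = 1 := Nat.odd_iff.mp ho
      have hp2 : p ≠ 2 := by
        intro h
        have h2 : 2 ∣ n := h ▸ hpn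
        omega
      have hp_odd : Odd p := hp.odd_of_ne_two hp2
      set k := n.factorization p with hkdef
      set m := n / p ^ k with hmdef
      have hk1 : 0 < k := hp.factorization_pos_of_dvd (by omega) hpn
      have hordc : p ^ k * m = n := Nat.ordProj_mul_ordCompl_eq_self n p
      have hpm : ¬ p ∣ m := Nat.not_dvd_ordCompl hp (by omega)
      have hm_pos : 0 < m := Nat.pos_of_ne_zero (fun h => by rw [h, mul_zero] at hordc; omega)
      have hmn : m ∣ n := Dvd.intro_left (p ^ k) hordc
      have hm_odd : Odd m := by
        rcases Nat.even_or_odd m with he | ho'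
        · exfalso
          have h2 : 2 ∣ m := he.two_dvd
          have h3 : 2 ∣ n := h2.trans hmn
          omega
        · exact ho'
      by_cases hm1 : m = 1
      · -- n is a prime power
        have hn_eq : n = p ^ k := by rw [← hordc, hm1, mul_one]
        rw [hn_eq] at hζ
        rw [hn_eq]
        by_cases hk2 : k = 1
        · rw [hk2, pow_one] at hζ ⊢
          exact gauss_prime p hp hp2 ζ hζ
        · have hk2' : 2 ≤ k := by omega
          have hred := gauss_pp p k hp hp2 hk2' ζ hζ
          have hprim : IsPrimitiveRoot (ζ ^ (p ^ 2)) (p ^ (k - 2)) :=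
            hζ.pow (pow_pos hp.pos k) (by rw [← pow_add]; congr 1; omega)
          have hlt : p ^ (k - 2) < n := by
            rw [hn_eq]; exact Nat.pow_lt_pow_right hp.one_lt (by omega)
          have hIH := IH _ hlt (pow_pos hp.pos _) (hp_odd.pow) _ hprim
          rw [hred, mul_pow, hIH]
          have hee : (eps (p ^ k) : K) = eps (p ^ (k - 2)) := by
            unfold eps
            have hps : p ^ k = p ^ (k - 2) * (p * p) := by
              rw [show p * p = p ^ 2 by ring, ← pow_add]; congr 1; omega
            have hmod : p ^ k % 4 = p ^ (k - 2) % 4 := by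
              have hp4 : p % 4 = 1 ∨ p % 4 = 3 := by
                have := Nat.odd_iff.mp hp_odd; omega
              rw [hps, Nat.mul_mod, Nat.mul_mod p p]
              rcases hp4 with h | h <;> rw [h] <;> norm_num
            rw [hmod]
          push_cast
          rw [hee]
          rw [show ((p : K) ^ k) = (p : K) ^ 2 * (p : K) ^ (k - 2) from by
            rw [← pow_add]; congr 1; omega]
          ring
      · -- n splits as a product of coprime factors > 1
        have ha1 : 1 < p ^ k := Nat.one_lt_pow (by omega) hp.one_lt
        have hb1 : 1 < m := by omega
        have hcop : (p ^ k).Coprime m := Nat.Coprime.pow_left _ ((hp.coprime_iff_not_dvd).mpr hpm)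
        have hAB : n = p ^ k * m := hordc.symm
        have hlta : p ^ k < n := by
          calc p ^ k < p ^ k * m := (lt_mul_iff_one_lt_right (by omega)).mpr hb1
            _ = n := hordc
        have hltb : m < n := by
          calc m < p ^ k * m := (lt_mul_iff_one_lt_left hm_pos).mpr ha1
            _ = n := hordc
        rw [hAB] at hζ ⊢
        have hζ1 : IsPrimitiveRoot (ζ ^ (m ^ 2)) (p ^ k) := by
          have h1 : IsPrimitiveRoot (ζ ^ m) (p ^ k) :=
            hζ.pow (Nat.mul_pos (by omega) hm_pos) (Nat.mul_comm _ _)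
          have h2 := h1.pow_of_coprime m hcop.symm
          rwa [← pow_mul, ← pow_two] at h2
        have hζ2 : IsPrimitiveRoot (ζ ^ ((p ^ k) ^ 2)) m := by
          have h1 : IsPrimitiveRoot (ζ ^ (p ^ k)) m :=
            hζ.pow (Nat.mul_pos (by omega) hm_pos) rfl
          have h2 := h1.pow_of_coprime (p ^ k) hcop
          rwa [← pow_mul, ← pow_two] at h2
        have hsplit := gauss_split (p ^ k) m (by omega) hm_pos hcop ζ hζ
        rw [hsplit, mul_pow]
        have hIHa := IH _ hlta (by omega) (hp_odd.pow) _ hζ1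
        have hIHb := IH _ hltb hm_pos hm_odd _ hζ2
        rw [hIHa, hIHb, eps_mul (hp_odd.pow) hm_odd]
        push_cast
        ring

end ClassicalGauss

/-- For an odd positive integer `n` and a primitive `n`-th root of unity `ζ` in a field `K`
of characteristic zero, the classical Gaussian sum `G = Σ ζ^(i²)` satisfies `G² = n` if
`n ≡ 1 (mod 4)` and `G² = -n` if `n ≡ 3 (mod 4)`. -/
theorem classical_gauss_sq {K : Type*} [Field K] [CharZero K]
    (n : ℕ) (hn : 0 < n) (hodd : Odd n) (ζ : K) (hζ : IsPrimitiveRoot ζ n) :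
    (n % 4 = 1 → (∑ i ∈ Finset.range n, ζ ^ (i ^ 2)) ^ 2 = (n : K)) ∧
    (n % 4 = 3 → (∑ i ∈ Finset.range n, ζ ^ (i ^ 2)) ^ 2 = -(n : K)) := by
  have h := ClassicalGauss.gauss_aux n hn hodd ζ hζ
  constructor
  · intro h4
    rw [h]
    simp only [ClassicalGauss.eps, if_pos h4, one_mul]
  · intro h4
    rw [h]
    simp only [ClassicalGauss.eps]
    rw [if_neg (by omega), neg_one_mul]
end

section
/- Suppose ξ is an N-th root of unity in a field of characteristic zero, and ξ^{q²} = ξ for all integers q relatively prime to N. Then ξ^{24} = 1. -/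
/-- Auxiliary: if `d ∣ N` and `d ∣ r*r - 1` for every `r` coprime to `N`, then for any
prime power `p^k ∣ d` and any `c ≥ 1` coprime to `p`, we get `p^k ∣ c*c - 1`. -/
lemma aux_def24 {N d : ℕ} (hN : N ≠ 0) (hd : d ∣ N)
    (key : ∀ r : ℕ, Nat.Coprime r N → d ∣ r * r - 1)
    {p k c : ℕ} (hp : p.Prime) (hc : Nat.Coprime c p) (hc1 : 1 ≤ c)
    (hk : 1 ≤ k) (hpk : p ^ k ∣ d) :
    p ^ k ∣ c * c - 1 := by
  have hpkN : p ^ k ∣ N := hpk.trans hd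
  set v := N.factorization p with hv
  have hkv : k ≤ v := (Nat.Prime.pow_dvd_iff_le_factorization hp hN).mp hpkN
  have cop : Nat.Coprime (p ^ v) (ordCompl[p] N) :=
    ((Nat.coprime_ordCompl hp hN).pow_left v)
  obtain ⟨r, h1, h2⟩ := Nat.chineseRemainder cop c 1
  have hpv1 : 1 ≤ v := hk.trans hkv
  have hpdvd : ¬ p ∣ c := (Nat.Prime.coprime_iff_not_dvd hp).mp hc.symm
  -- r is coprime to p
  have h1p : r ≡ c [MOD p] := h1.of_dvd (dvd_pow_self p (Nat.one_le_iff_ne_zero.mp hpv1))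
  have hrp : Nat.Coprime r p := by
    have : Nat.gcd r p = Nat.gcd c p := Nat.ModEq.gcd_eq h1p
    simpa [Nat.Coprime, this] using hc
  -- r is coprime to the complement
  have hrm : Nat.Coprime r (ordCompl[p] N) := by
    have : Nat.gcd r (ordCompl[p] N) = Nat.gcd 1 (ordCompl[p] N) := Nat.ModEq.gcd_eq h2
    simpa [Nat.Coprime] using this
  have hrN : Nat.Coprime r N := by
    rw [← Nat.ordProj_mul_ordCompl_eq_self N p]
    exact Nat.Coprime.mul_right ((hrp.pow_right v)) hrm
  have hdr : d ∣ r * r - 1 := key r hrN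
  have hr0 : r ≠ 0 := by
    intro hr
    rw [hr] at hrN
    rw [Nat.coprime_zero_left] at hrN
    rw [hrN] at hpkN
    have := Nat.le_of_dvd one_pos hpkN
    have : 2 ≤ p ^ k := by
      calc 2 ≤ p := hp.two_le
      _ = p ^ 1 := (pow_one p).symm
      _ ≤ p ^ k := Nat.pow_le_pow_right hp.pos hk
    omega
  have hr1 : 1 ≤ r * r := Nat.one_le_iff_ne_zero.mpr (Nat.mul_ne_zero hr0 hr0)
  have hpkr : p ^ k ∣ r * r - 1 := hpk.trans hdr
  have hmod1 : r * r ≡ 1 [MOD p ^ k] := ((Nat.modEq_iff_dvd' hr1).mpr hpkr).symm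
  have h1k : r ≡ c [MOD p ^ k] := h1.of_dvd (pow_dvd_pow p hkv)
  have hcc : c * c ≡ 1 [MOD p ^ k] := (h1k.mul h1k).symm.trans hmod1
  exact (Nat.modEq_iff_dvd' (Nat.one_le_iff_ne_zero.mpr (by positivity))).mp hcc.symm

/-- "Definition of 24": if `ξ` is an `N`-th root of unity in a field of characteristic zero
and `ξ^(q²) = ξ` for every integer `q` coprime to `N`, then `ξ²⁴ = 1`. -/
theorem definition_of_24 {K : Type*} [Field K] [CharZero K]
    (N : ℕ) (hN : 0 < N) (ξ : K) (hξ : ξ ^ N = 1)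
    (h : ∀ q : ℤ, Int.gcd q N = 1 → ξ ^ (q ^ 2) = ξ) :
    ξ ^ 24 = 1 := by
  have hξ0 : ξ ≠ 0 := by
    intro h0
    rw [h0, zero_pow hN.ne'] at hξ
    exact zero_ne_one hξ
  set d := orderOf ξ with hdd
  have hdN : d ∣ N := orderOf_dvd_of_pow_eq_one hξ
  have key : ∀ r : ℕ, Nat.Coprime r N → d ∣ r * r - 1 := by
    intro r hr
    rcases Nat.eq_zero_or_pos r with hr0 | hr0
    · simp [hr0]
    have hg : Int.gcd (r : ℤ) (N : ℤ) = 1 := by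
      rwa [Int.gcd_natCast_natCast]
    have hq := h r hg
    rw [show ((r : ℤ) ^ 2) = ((r * r : ℕ) : ℤ) by push_cast; ring, zpow_natCast] at hq
    have hrr : 1 ≤ r * r := Nat.one_le_iff_ne_zero.mpr (Nat.mul_ne_zero hr0.ne' hr0.ne')
    have : ξ ^ (r * r - 1) * ξ = ξ := by
      rw [← pow_succ, Nat.sub_add_cancel hrr, hq]
    have hpow : ξ ^ (r * r - 1) = 1 := by
      field_simp at this
      exact this
    exact orderOf_dvd_of_pow_eq_one hpow
  have hd24 : d ∣ 24 := by
    rw [Nat.dvd_iff_prime_pow_dvd_dvd]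
    intro p k hp hpk
    have hp' : p.Prime := hp
    rcases Nat.eq_zero_or_pos k with hk0 | hk0
    · simp [hk0]
    rcases eq_or_ne p 2 with hp2 | hp2
    · subst hp2
      have h8 : 2 ^ k ∣ 3 * 3 - 1 :=
        aux_def24 hN.ne' hdN key hp' (by norm_num) (by norm_num) hk0 hpk
      exact h8.trans (by norm_num)
    rcases eq_or_ne p 3 with hp3 | hp3
    · subst hp3
      have h3 : 3 ^ k ∣ 2 * 2 - 1 :=
        aux_def24 hN.ne' hdN key hp' (by norm_num) (by norm_num) hk0 hpk
      exact h3.trans (by norm_num)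
    · exfalso
      have h3 : p ^ k ∣ 2 * 2 - 1 :=
        aux_def24 hN.ne' hdN key hp'
          ((Nat.coprime_primes (by norm_num) hp').mpr (Ne.symm hp2)) (by norm_num) hk0 hpk
      have hpd3 : p ∣ 3 := (dvd_pow_self p (Nat.one_le_iff_ne_zero.mp hk0)).trans (by simpa using h3)
      have := (Nat.prime_dvd_prime_iff_eq hp' (by norm_num)).mp hpd3
      exact hp3 this
  exact orderOf_dvd_iff_pow_eq_one.mp hd24
end

section
/- Suppose ξ is an N-th root of unity with N odd in a field of characteristic zero, and ξ^{q²} = ξ for all integers q relatively prime to N. Then ξ³ = 1. -/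
/-- If `ξ` is an `N`-th root of unity with `N` odd in a field of characteristic zero
and `ξ^(q²) = ξ` for every integer `q` coprime to `N`, then `ξ³ = 1`. -/
theorem definition_of_24_odd {K : Type*} [Field K] [CharZero K]
    (N : ℕ) (hN : 0 < N) (hodd : Odd N) (ξ : K) (hξ : ξ ^ N = 1)
    (h : ∀ q : ℤ, Int.gcd q N = 1 → ξ ^ (q ^ 2) = ξ) :
    ξ ^ 3 = 1 := by
  have hne : ξ ≠ 0 := by
    intro h0
    rw [h0, zero_pow hN.ne'] at hξ
    exact zero_ne_one hξ
  have hg : Int.gcd (2 : ℤ) N = 1 := by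
    have : Nat.Coprime 2 N := hodd.coprime_two_left
    simpa [Int.gcd] using this
  have h4 : ξ ^ (4 : ℕ) = ξ := by
    have := h 2 hg
    norm_num at this
    exact_mod_cast this
  have : ξ ^ 3 * ξ = 1 * ξ := by
    rw [one_mul, ← pow_succ]
    exact h4
  exact mul_right_cancel₀ hne this
end

section
/- For a modular datum, the Gaussian sum g = Σ_{i∈I} n_i² t_i and the reciprocal Gaussian sum g' = Σ_{i∈I} n_i²/t_i satisfy g·g' = n·n_o², where n is the global dimension and n_o = s_{oo}. In particular both g and g' are nonzero. -/
open Finset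

/-- A modular datum over a field `K` of characteristic zero: a finite index set `I` with a
distinguished element `o`, an involution `star` fixing `o`, a symmetric Verlinde matrix `S`
with nonzero first column, a diagonal Dehn matrix with entries `T i` of finite order
satisfying `T (star i) = T i`, such that `S² = n·C` for a nonzero global dimension `n`
(where `C = (δ_{i,j*})`), the matrices `T⁻¹ST⁻¹` and `STS` are proportional, and the
Verlinde numbers `N_{ij}^k` are nonnegative integers. -/
structure ModularDatum (K : Type*) [Field K] [CharZero K]
    (I : Type*) [Fintype I] [DecidableEq I] where
  o : I
  star : I → I
  S : Matrix I I K
  T : I → K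
  n : K
  star_involutive : Function.Involutive star
  star_o : star o = o
  S_symm : ∀ i j, S i j = S j i
  S_io_ne : ∀ i, S i o ≠ 0
  T_star : ∀ i, T (star i) = T i
  T_order : ∃ N : ℕ, 0 < N ∧ ∀ i, T i ^ N = 1
  n_ne : n ≠ 0
  S_sq : ∀ i k, (∑ j, S i j * S j k) = n * (if i = star k then 1 else 0)
  proportional : ∃ c : K, ∀ i j,
    (T i)⁻¹ * S i j * (T j)⁻¹ = c * ∑ k, S i k * T k * S k j
  verlinde : ∀ i j k, ∃ m : ℕ,
    (1 / n) * ∑ l, S i l * S j l * S (star k) l / S o l = (m : K)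

namespace ModularDatum

variable {K : Type*} [Field K] [CharZero K] {I : Type*} [Fintype I] [DecidableEq I]
variable (d : ModularDatum K I)

/-- The `i`-th dimension `n_i = s_{io}`. -/
def ni (i : I) : K := d.S i d.o

/-- The Gaussian sum `g = Σ_i n_i² t_i`. -/
def gauss : K := ∑ i, d.ni i ^ 2 * d.T i

/-- The reciprocal Gaussian sum `g' = Σ_i n_i² / t_i`. -/
def gauss' : K := ∑ i, d.ni i ^ 2 * (d.T i)⁻¹

/-- The Verlinde numbers `N_{ij}^k = (1/n) Σ_l s_{il} s_{jl} s_{k*l} / s_{ol}`. -/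
def Nc (i j k : I) : K := (1 / d.n) * ∑ l, d.S i l * d.S j l * d.S (d.star k) l / d.S d.o l

end ModularDatum

/-- For a modular datum, the Gaussian sum and the reciprocal Gaussian sum satisfy
`g·g' = n·n_o²`; in particular both are nonzero. -/
theorem ModularDatum.gauss_mul_gauss' {K : Type*} [Field K] [CharZero K]
    {I : Type*} [Fintype I] [DecidableEq I] (d : ModularDatum K I) :
    d.gauss * d.gauss' = d.n * d.ni d.o ^ 2 ∧ d.gauss ≠ 0 ∧ d.gauss' ≠ 0 := by

  obtain ⟨c, hc⟩ := d.proportional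
  obtain ⟨N, hN, hTN⟩ := d.T_order
  have hT : ∀ i, d.T i ≠ 0 := fun i h => by
    have := hTN i; rw [h, zero_pow hN.ne'] at this; exact zero_ne_one this
  have ht := hT d.o
  have ha : d.S d.o d.o ≠ 0 := d.S_io_ne d.o
  -- eq1 : c * gauss = t⁻¹ * a * t⁻¹
  have eq1 : (d.T d.o)⁻¹ * d.S d.o d.o * (d.T d.o)⁻¹ = c * d.gauss := by
    have h := hc d.o d.o
    rw [h]; unfold gauss ni; congr 1
    exact Finset.sum_congr rfl fun k _ => by rw [d.S_symm d.o k]; ring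
  -- eq2 : t⁻¹ * gauss' = c * (n * (t * a))
  have eq2 : (d.T d.o)⁻¹ * d.gauss' = c * (d.n * (d.T d.o * d.S d.o d.o)) := by
    have hL : ∑ i, d.S d.o i * ((d.T i)⁻¹ * d.S i d.o * (d.T d.o)⁻¹)
        = (d.T d.o)⁻¹ * d.gauss' := by
      unfold gauss' ni; rw [Finset.mul_sum]
      exact Finset.sum_congr rfl fun i _ => by rw [d.S_symm d.o i]; ring
    rw [← hL]
    calc ∑ i, d.S d.o i * ((d.T i)⁻¹ * d.S i d.o * (d.T d.o)⁻¹)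
        = ∑ i, d.S d.o i * (c * ∑ k, d.S i k * d.T k * d.S k d.o) := by
          exact Finset.sum_congr rfl fun i _ => by rw [hc i d.o]
      _ = c * ∑ k, (∑ i, d.S d.o i * d.S i k) * (d.T k * d.S k d.o) := by
          simp_rw [Finset.mul_sum, Finset.sum_mul, Finset.mul_sum]
          rw [Finset.sum_comm]
          exact Finset.sum_congr rfl fun k _ =>
            Finset.sum_congr rfl fun i _ => by ring
      _ = c * ∑ k, (d.n * (if d.o = d.star k then 1 else 0)) * (d.T k * d.S k d.o) := by
          congr 1
          exact Finset.sum_congr rfl fun k _ => by rw [d.S_sq d.o k]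
      _ = c * (d.n * (d.T d.o * d.S d.o d.o)) := by
          congr 1
          rw [Finset.sum_eq_single d.o]
          · rw [if_pos d.star_o.symm]; ring
          · intro k _ hk
            have hne : d.o ≠ d.star k := fun h =>
              hk (by rw [← d.star_involutive k, ← h, d.star_o])
            rw [if_neg hne]; ring
          · intro h; exact absurd (Finset.mem_univ d.o) h
  have hg' : d.gauss' = d.T d.o * (c * (d.n * (d.T d.o * d.S d.o d.o))) := by
    rw [← eq2, ← mul_assoc, mul_inv_cancel₀ ht, one_mul]
  have hcg : c * d.gauss ≠ 0 := by
    rw [← eq1]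
    exact mul_ne_zero (mul_ne_zero (inv_ne_zero ht) ha) (inv_ne_zero ht)
  have hcne : c ≠ 0 := fun h => hcg (by rw [h, zero_mul])
  have hgne : d.gauss ≠ 0 := fun h => hcg (by rw [h, mul_zero])
  have hg'ne : d.gauss' ≠ 0 := by
    rw [hg']
    exact mul_ne_zero ht (mul_ne_zero hcne (mul_ne_zero d.n_ne (mul_ne_zero ht ha)))
  refine ⟨?_, hgne, hg'ne⟩
  have key : c * (d.gauss * d.gauss') = c * (d.n * d.ni d.o ^ 2) := by
    have : c * (d.gauss * d.gauss')
        = (c * d.gauss) * (d.T d.o * (c * (d.n * (d.T d.o * d.S d.o d.o)))) := by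
      rw [← hg']; ring
    rw [this, ← eq1]
    unfold ni
    field_simp
  exact mul_left_cancel₀ hcne key
end

section
/- For a modular datum, for each q ∈ I the map ξ_q sending the basis element b_i of the fusion ring to s_{iq}/n_q is a ring homomorphism from the fusion ring F to K; that is, ξ_q(b_i)ξ_q(b_j) = Σ_k N_{ij}^k ξ_q(b_k) and ξ_q(b_o) = 1. -/
open Finset

namespace ModularDatum

variable {K : Type*} [Field K] [CharZero K] {I : Type*} [Fintype I] [DecidableEq I]
variable (d : ModularDatum K I)

lemma star_swap (i j : I) : d.S (d.star i) j = d.S i (d.star j) := by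
  have hA : ∑ k, d.S i k * ∑ l, d.S k l * d.S l j = d.n * d.S i (d.star j) := by
    have : ∀ k, d.S i k * ∑ l, d.S k l * d.S l j
        = d.S i k * (d.n * (if k = d.star j then 1 else 0)) := by
      intro k; rw [d.S_sq k j]
    rw [Finset.sum_congr rfl fun k _ => this k]
    simp [mul_ite, Finset.mul_sum]
    ring
  have hB : ∑ k, d.S i k * ∑ l, d.S k l * d.S l j = d.n * d.S (d.star i) j := by
    have : ∑ k, d.S i k * ∑ l, d.S k l * d.S l j
        = ∑ l, (∑ k, d.S i k * d.S k l) * d.S l j := by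
      simp only [Finset.mul_sum, Finset.sum_mul]
      rw [Finset.sum_comm]
      exact Finset.sum_congr rfl fun l _ => Finset.sum_congr rfl fun k _ => by ring
    rw [this]
    have h2 : ∀ l, (∑ k, d.S i k * d.S k l) * d.S l j
        = (d.n * (if i = d.star l then 1 else 0)) * d.S l j := by
      intro l; rw [d.S_sq]
    rw [Finset.sum_congr rfl fun l _ => h2 l]
    have h3 : ∀ l, (d.n * (if i = d.star l then 1 else 0)) * d.S l j
        = (d.n * (if l = d.star i then 1 else 0)) * d.S l j := by
      intro l
      congr 2
      by_cases h : l = d.star i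
      · subst h; simp [d.star_involutive i]
      · have : i ≠ d.star l := fun hc => h (by rw [hc, d.star_involutive])
        simp [h, this]
    rw [Finset.sum_congr rfl fun l _ => h3 l]
    simp [ite_mul]
  have := hA.symm.trans hB
  exact (mul_left_cancel₀ d.n_ne this).symm

lemma key (l q : I) : ∑ k, d.S (d.star k) l * d.S k q = d.n * (if l = q then 1 else 0) := by
  have h1 : ∀ k, d.S (d.star k) l * d.S k q = d.S (d.star l) k * d.S k q := by
    intro k
    rw [d.star_swap, d.S_symm, d.star_swap, d.S_symm]
  rw [Finset.sum_congr rfl fun k _ => h1 k, d.S_sq]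
  congr 1
  by_cases h : l = q
  · simp [h]
  · have : d.star l ≠ d.star q := fun hc => h (d.star_involutive.injective hc)
    simp [h, this]

end ModularDatum

/-- For a modular datum, for each `q ∈ I` the assignment `b_i ↦ s_{iq}/n_q` is a ring
homomorphism from the fusion ring to `K`: it is multiplicative with respect to the
structure constants `N_{ij}^k`, and it sends the unit `b_o` to `1`. -/
theorem ModularDatum.xi_ringHom {K : Type*} [Field K] [CharZero K]
    {I : Type*} [Fintype I] [DecidableEq I] (d : ModularDatum K I) :
    (∀ q i j, (d.S i q / d.ni q) * (d.S j q / d.ni q)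
        = ∑ k, d.Nc i j k * (d.S k q / d.ni q)) ∧
    ∀ q, d.S d.o q / d.ni q = 1 := by
  constructor
  · intro q i j
    have hnq : d.ni q ≠ 0 := by
      have := d.S_io_ne q; simpa [ModularDatum.ni] using this
    have hoq : d.S d.o q = d.ni q := d.S_symm d.o q
    have h1 : ∑ k, d.Nc i j k * (d.S k q / d.ni q)
        = (1/d.n) * (d.ni q)⁻¹ *
          ∑ k, ∑ l, (d.S i l * d.S j l / d.S d.o l) * (d.S (d.star k) l * d.S k q) := by
      simp only [ModularDatum.Nc]
      rw [Finset.mul_sum]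
      refine Finset.sum_congr rfl fun k _ => ?_
      simp only [Finset.mul_sum, Finset.sum_mul]
      refine Finset.sum_congr rfl fun l _ => ?_
      ring
    rw [h1, Finset.sum_comm]
    have h2 : ∀ l, ∑ k, (d.S i l * d.S j l / d.S d.o l) * (d.S (d.star k) l * d.S k q)
        = (d.S i l * d.S j l / d.S d.o l) * (d.n * (if l = q then 1 else 0)) := by
      intro l
      rw [← Finset.mul_sum, d.key]
    rw [Finset.sum_congr rfl fun l _ => h2 l]
    simp only [mul_ite, mul_one, mul_zero, Finset.sum_ite_eq', Finset.mem_univ, if_true]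
    rw [hoq]
    have hn := d.n_ne
    field_simp
  · intro q
    have hnq : d.ni q ≠ 0 := by
      have := d.S_io_ne q; simpa [ModularDatum.ni] using this
    rw [d.S_symm d.o q]
    exact div_self hnq
end

section
/- For a modular datum, for all i ∈ I we have ξ_i(b_A) = n/n_i², where b_A = Σ_{j∈I} b_j b_{j*} in the fusion ring. In particular ξ_i(b_A) ≠ 0. -/
open Finset

section Aux

variable {K : Type*} [Field K] [CharZero K] {I : Type*} [Fintype I] [DecidableEq I]
variable (d : ModularDatum K I)

lemma ModularDatum.S_star_comm (i j : I) : d.S (d.star i) j = d.S i (d.star j) := by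
  have e1 : ∑ k, (d.n * if i = d.star k then (1:K) else 0) * d.S k j
      = d.n * d.S (d.star i) j := by
    rw [Finset.sum_eq_single (d.star i)]
    · simp [d.star_involutive i]
    · intro b _ hb
      have hib : i ≠ d.star b := fun h => hb (by rw [h, d.star_involutive])
      simp [hib]
    · simp
  have e2 : ∑ k, d.S i k * (d.n * if k = d.star j then (1:K) else 0)
      = d.n * d.S i (d.star j) := by
    rw [Finset.sum_eq_single (d.star j)]
    · simp [mul_comm]
    · intro b _ hb; simp [hb]
    · simp
  have h1 : ∑ k, (d.n * if i = d.star k then (1:K) else 0) * d.S k j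
      = ∑ k, d.S i k * (d.n * if k = d.star j then (1:K) else 0) := by
    calc ∑ k, (d.n * if i = d.star k then (1:K) else 0) * d.S k j
        = ∑ k, (∑ l, d.S i l * d.S l k) * d.S k j := by simp_rw [d.S_sq]
      _ = ∑ l, d.S i l * ∑ k, d.S l k * d.S k j := by
          simp_rw [Finset.sum_mul, Finset.mul_sum]
          rw [Finset.sum_comm]
          exact Finset.sum_congr rfl fun l _ => Finset.sum_congr rfl fun k _ => by ring
      _ = ∑ k, d.S i k * (d.n * if k = d.star j then (1:K) else 0) := by simp_rw [d.S_sq]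
  exact mul_left_cancel₀ d.n_ne (e1 ▸ e2 ▸ h1)

lemma ModularDatum.key1 (l i : I) :
    ∑ k, d.S (d.star k) l * d.S k i = d.n * (if l = i then 1 else 0) := by
  have : ∀ k, d.S (d.star k) l = d.S (d.star l) k := fun k => by
    rw [d.S_star_comm, d.S_symm]
  simp_rw [this, d.S_sq]
  congr 1
  simp [d.star_involutive.injective.eq_iff]

lemma ModularDatum.key2 (i : I) : ∑ j, d.S j i * d.S (d.star j) i = d.n := by
  have : ∀ j, d.S j i * d.S (d.star j) i = d.S i j * d.S j (d.star i) := fun j => by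
    rw [d.S_star_comm, d.S_symm]
  simp_rw [this, d.S_sq]
  simp [d.star_involutive i]

end Aux

/-- For a modular datum, `ξ_i(b_A) = n/n_i²`, where `b_A = Σ_j b_j b_{j*}` in the fusion
ring, so that `ξ_i(b_A) = Σ_j Σ_k N_{j,j*}^k ξ_i(b_k)`. In particular `ξ_i(b_A) ≠ 0`. -/
theorem ModularDatum.xi_bA {K : Type*} [Field K] [CharZero K]
    {I : Type*} [Fintype I] [DecidableEq I] (d : ModularDatum K I) (i : I) :
    (∑ j, ∑ k, d.Nc j (d.star j) k * (d.S k i / d.ni i)) = d.n / d.ni i ^ 2 ∧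
    (∑ j, ∑ k, d.Nc j (d.star j) k * (d.S k i / d.ni i)) ≠ 0 := by
  have hni : d.ni i ≠ 0 := d.S_io_ne i
  have hSoi : d.S d.o i = d.ni i := d.S_symm d.o i
  have step : ∀ j, ∑ k, d.Nc j (d.star j) k * (d.S k i / d.ni i)
      = d.S j i * d.S (d.star j) i / (d.ni i ^ 2) := by
    intro j
    calc ∑ k, d.Nc j (d.star j) k * (d.S k i / d.ni i)
        = ∑ k, ∑ l, (d.S j l * d.S (d.star j) l / d.S d.o l) *
            (d.S (d.star k) l * d.S k i) / (d.n * d.ni i) := by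
          refine Finset.sum_congr rfl fun k _ => ?_
          rw [ModularDatum.Nc, Finset.mul_sum, Finset.sum_mul]
          exact Finset.sum_congr rfl fun l _ => by ring
      _ = ∑ l, (d.S j l * d.S (d.star j) l / d.S d.o l) *
            (∑ k, d.S (d.star k) l * d.S k i) / (d.n * d.ni i) := by
          rw [Finset.sum_comm]
          refine Finset.sum_congr rfl fun l _ => ?_
          rw [Finset.mul_sum, Finset.sum_div]
      _ = (d.S j i * d.S (d.star j) i / d.S d.o i) * d.n / (d.n * d.ni i) := by
          simp_rw [d.key1]
          rw [Finset.sum_eq_single i]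
          · simp
          · intro b _ hb; simp [hb]
          · simp
      _ = d.S j i * d.S (d.star j) i / (d.ni i ^ 2) := by
          rw [hSoi]
          field_simp [d.n_ne, hni]
  have main : (∑ j, ∑ k, d.Nc j (d.star j) k * (d.S k i / d.ni i)) = d.n / d.ni i ^ 2 := by
    calc ∑ j, ∑ k, d.Nc j (d.star j) k * (d.S k i / d.ni i)
        = ∑ j, d.S j i * d.S (d.star j) i / d.ni i ^ 2 :=
          Finset.sum_congr rfl fun j _ => step j
      _ = (∑ j, d.S j i * d.S (d.star j) i) / d.ni i ^ 2 := by rw [Finset.sum_div]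
      _ = d.n / d.ni i ^ 2 := by rw [d.key2]
  exact ⟨main, main ▸ div_ne_zero d.n_ne (pow_ne_zero 2 hni)⟩
end

section
/- For a modular datum, the entries of the Verlinde matrix satisfy s_{ij} = (t_o/(t_i t_j)) Σ_{k∈I} N_{ik}^j n_k t_k for all i, j ∈ I. -/
open Finset

namespace ModularDatum

variable {K : Type*} [Field K] [CharZero K] {I : Type*} [Fintype I] [DecidableEq I]
variable (d : ModularDatum K I)

lemma T_ne (i : I) : d.T i ≠ 0 := by
  obtain ⟨N, hN, h⟩ := d.T_order
  intro h0
  have := h i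
  rw [h0, zero_pow hN.ne'] at this
  exact one_ne_zero this.symm

set_option linter.unusedSectionVars false in
lemma tri {f : I → I → I → K} :
    (∑ l, ∑ m, ∑ k, f l m k) = ∑ k, ∑ m, ∑ l, f l m k := by
  calc (∑ l, ∑ m, ∑ k, f l m k) = ∑ l, ∑ k, ∑ m, f l m k :=
        Finset.sum_congr rfl fun l _ => Finset.sum_comm
    _ = ∑ k, ∑ l, ∑ m, f l m k := Finset.sum_comm
    _ = ∑ k, ∑ m, ∑ l, f l m k :=
        Finset.sum_congr rfl fun k _ => Finset.sum_comm

set_option linter.unusedSectionVars false in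
lemma mulsum (a : K) (A B : I → K) :
    (∑ m, ∑ l, a * A m * B l) = a * ((∑ m, A m) * (∑ l, B l)) := by
  rw [Finset.sum_mul, Finset.mul_sum]
  exact Finset.sum_congr rfl fun m _ => by rw [← mul_assoc, Finset.mul_sum]

lemma lemA (c : K)
    (hc : ∀ i j, (d.T i)⁻¹ * d.S i j * (d.T j)⁻¹ = c * ∑ k, d.S i k * d.T k * d.S k j)
    (i j : I) :
    (∑ l, ∑ m, d.S i m * (d.T m)⁻¹ * d.S m l * (d.T l)⁻¹ * d.S l j)
      = c * d.n * d.n * d.T i * (if i = j then 1 else 0) := by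
  have h1 : (∑ l, ∑ m, d.S i m * (d.T m)⁻¹ * d.S m l * (d.T l)⁻¹ * d.S l j)
      = ∑ l, ∑ m, ∑ k, d.S i m * (c * (d.S m k * d.T k * d.S k l)) * d.S l j := by
    refine Finset.sum_congr rfl fun l _ => Finset.sum_congr rfl fun m _ => ?_
    have hml := hc m l
    calc d.S i m * (d.T m)⁻¹ * d.S m l * (d.T l)⁻¹ * d.S l j
        = d.S i m * ((d.T m)⁻¹ * d.S m l * (d.T l)⁻¹) * d.S l j := by ring
      _ = d.S i m * (c * ∑ k, d.S m k * d.T k * d.S k l) * d.S l j := by rw [hml]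
      _ = ∑ k, d.S i m * (c * (d.S m k * d.T k * d.S k l)) * d.S l j := by
          simp only [Finset.mul_sum, Finset.sum_mul]
  have h2 : (∑ l, ∑ m, ∑ k, d.S i m * (c * (d.S m k * d.T k * d.S k l)) * d.S l j)
      = ∑ k, c * d.T k * ((∑ m, d.S i m * d.S m k) * (∑ l, d.S k l * d.S l j)) := by
    rw [tri]
    refine Finset.sum_congr rfl fun k _ => ?_
    calc (∑ m, ∑ l, d.S i m * (c * (d.S m k * d.T k * d.S k l)) * d.S l j)
        = ∑ m, ∑ l, (c * d.T k) * (d.S i m * d.S m k) * (d.S k l * d.S l j) :=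
          Finset.sum_congr rfl fun m _ => Finset.sum_congr rfl fun l _ => by ring
      _ = c * d.T k * ((∑ m, d.S i m * d.S m k) * (∑ l, d.S k l * d.S l j)) :=
          mulsum _ _ _
  rw [h1, h2]
  rw [Finset.sum_congr rfl fun k (_ : k ∈ Finset.univ) => by rw [d.S_sq i k, d.S_sq k j]]
  rw [Finset.sum_eq_single (d.star i)
    (fun b _ hb => by
      rw [if_neg (fun h : i = d.star b => hb (by rw [h, d.star_involutive]))]
      ring)
    (fun h => absurd (Finset.mem_univ _) h)]
  rw [if_pos (d.star_involutive i).symm, d.T_star]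
  by_cases hij : i = j
  · rw [if_pos (by rw [hij]), if_pos hij]; ring
  · rw [if_neg (fun h : d.star i = d.star j => hij (d.star_involutive.injective h)),
      if_neg hij]; ring

lemma lemB (c : K)
    (hc : ∀ i j, (d.T i)⁻¹ * d.S i j * (d.T j)⁻¹ = c * ∑ k, d.S i k * d.T k * d.S k j)
    (i p : I) :
    (∑ m, d.S i m * (d.T m)⁻¹ * d.S m (d.star p)) = c * d.n * d.T i * d.T p * d.S i p := by
  have E1 : (∑ j, (∑ l, ∑ m, d.S i m * (d.T m)⁻¹ * d.S m l * (d.T l)⁻¹ * d.S l j) * d.S j p)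
      = c * d.n * d.n * d.T i * d.S i p := by
    rw [Finset.sum_congr rfl fun j (_ : j ∈ Finset.univ) => by rw [d.lemA c hc i j]]
    rw [Finset.sum_eq_single i
      (fun b _ hb => by rw [if_neg (Ne.symm hb)]; ring)
      (fun h => absurd (Finset.mem_univ _) h)]
    rw [if_pos rfl]; ring
  have E2 : (∑ j, (∑ l, ∑ m, d.S i m * (d.T m)⁻¹ * d.S m l * (d.T l)⁻¹ * d.S l j) * d.S j p)
      = d.n * ((d.T p)⁻¹ * ∑ m, d.S i m * (d.T m)⁻¹ * d.S m (d.star p)) := by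
    have swap : (∑ j, (∑ l, ∑ m, d.S i m * (d.T m)⁻¹ * d.S m l * (d.T l)⁻¹ * d.S l j) * d.S j p)
        = ∑ l, (∑ m, d.S i m * (d.T m)⁻¹ * d.S m l) * (d.T l)⁻¹ * (∑ j, d.S l j * d.S j p) := by
      have e1 : (∑ j, (∑ l, ∑ m, d.S i m * (d.T m)⁻¹ * d.S m l * (d.T l)⁻¹ * d.S l j) * d.S j p)
          = ∑ j, ∑ l, ∑ m, d.S i m * (d.T m)⁻¹ * d.S m l * (d.T l)⁻¹ * d.S l j * d.S j p := by
        refine Finset.sum_congr rfl fun j _ => ?_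
        simp only [Finset.sum_mul]
      rw [e1, tri, Finset.sum_comm]
      refine Finset.sum_congr rfl fun l _ => ?_
      calc (∑ m, ∑ j, d.S i m * (d.T m)⁻¹ * d.S m l * (d.T l)⁻¹ * d.S l j * d.S j p)
          = ∑ m, ∑ j, (d.T l)⁻¹ * (d.S i m * (d.T m)⁻¹ * d.S m l) * (d.S l j * d.S j p) :=
            Finset.sum_congr rfl fun m _ => Finset.sum_congr rfl fun jj _ => by ring
        _ = (d.T l)⁻¹ * ((∑ m, d.S i m * (d.T m)⁻¹ * d.S m l) * (∑ j, d.S l j * d.S j p)) :=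
            mulsum _ _ _
        _ = (∑ m, d.S i m * (d.T m)⁻¹ * d.S m l) * (d.T l)⁻¹ * (∑ j, d.S l j * d.S j p) := by
            ring
    rw [swap]
    rw [Finset.sum_eq_single (d.star p)
      (fun b _ hb => by rw [d.S_sq b p, if_neg hb]; ring)
      (fun h => absurd (Finset.mem_univ _) h)]
    rw [d.S_sq (d.star p) p, if_pos rfl, d.T_star, mul_one]
    ring
  have key : ∀ X : K, c * d.n * d.n * d.T i * d.S i p = d.n * ((d.T p)⁻¹ * X) →
      X = c * d.n * d.T i * d.T p * d.S i p := by
    intro X h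
    apply mul_left_cancel₀ d.n_ne
    field_simp [d.T_ne p] at h
    linear_combination -h
  exact key _ (E1.symm.trans E2)


end ModularDatum

/-- For a modular datum, the Verlinde matrix entries satisfy
`s_{ij} = (t_o/(t_i t_j)) Σ_k N_{ik}^j n_k t_k`. -/
theorem ModularDatum.S_eq_sum_Nc {K : Type*} [Field K] [CharZero K]
    {I : Type*} [Fintype I] [DecidableEq I] (d : ModularDatum K I) (i j : I) :
    d.S i j = (d.T d.o / (d.T i * d.T j)) * ∑ k, d.Nc i k j * d.ni k * d.T k := by
  obtain ⟨c, hc⟩ := d.proportional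
  have hc0 : c ≠ 0 := by
    intro h0
    have h := hc d.o d.o
    rw [h0, zero_mul] at h
    have hT := d.T_ne d.o
    have hS := d.S_io_ne d.o
    field_simp at h
    exact hS (by rw [h, mul_zero])
  have key : (∑ k, d.Nc i k j * d.ni k * d.T k) = d.T i * d.T j * d.S i j / d.T d.o := by
    have step1 : (∑ k, d.Nc i k j * d.ni k * d.T k)
        = ∑ l, ∑ k, (1 / d.n) * (d.S i l * d.S k l * d.S (d.star j) l / d.S d.o l)
            * (d.S k d.o * d.T k) := by
      rw [Finset.sum_comm]
      refine Finset.sum_congr rfl fun k _ => ?_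
      unfold Nc ni
      simp only [Finset.mul_sum, Finset.sum_mul]
      exact Finset.sum_congr rfl fun l _ => by ring
    rw [step1]
    have inner : ∀ l : I, (∑ k, (1 / d.n) * (d.S i l * d.S k l * d.S (d.star j) l / d.S d.o l)
            * (d.S k d.o * d.T k))
        = (1 / d.n) * (d.S i l * d.S (d.star j) l / d.S d.o l)
            * (c⁻¹ * ((d.T l)⁻¹ * d.S l d.o * (d.T d.o)⁻¹)) := by
      intro l
      have e : (∑ k, (1 / d.n) * (d.S i l * d.S k l * d.S (d.star j) l / d.S d.o l)
            * (d.S k d.o * d.T k))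
          = (1 / d.n) * (d.S i l * d.S (d.star j) l / d.S d.o l)
            * (∑ k, d.S l k * d.T k * d.S k d.o) := by
        rw [Finset.mul_sum]
        refine Finset.sum_congr rfl fun k _ => ?_
        rw [d.S_symm l k]
        ring
      rw [e, hc l d.o, inv_mul_cancel_left₀ hc0]
    rw [Finset.sum_congr rfl fun l (_ : l ∈ Finset.univ) => inner l]
    have term : ∀ l : I, (1 / d.n) * (d.S i l * d.S (d.star j) l / d.S d.o l)
          * (c⁻¹ * ((d.T l)⁻¹ * d.S l d.o * (d.T d.o)⁻¹))
        = (1 / d.n) * c⁻¹ * (d.T d.o)⁻¹ * (d.S i l * (d.T l)⁻¹ * d.S l (d.star j)) := by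
      intro l
      have hol : d.S d.o l ≠ 0 := by rw [d.S_symm]; exact d.S_io_ne l
      rw [d.S_symm l d.o, d.S_symm l (d.star j)]
      field_simp [hol]
    rw [Finset.sum_congr rfl fun l (_ : l ∈ Finset.univ) => term l]
    rw [← Finset.mul_sum, d.lemB c hc i j]
    have hn := d.n_ne
    have hTo := d.T_ne d.o
    field_simp
  rw [key]
  have hTi := d.T_ne i
  have hTj := d.T_ne j
  have hTo := d.T_ne d.o
  field_simp
end

section
/- For a modular datum with index set I of cardinality m, exponent N (the order of T), Gaussian sum g and reciprocal Gaussian sum g', we have g^{2Nm} = g'^{2Nm}. -/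
open Finset

/-- For a modular datum with `m` simple objects and exponent `N` (so `T^N = E`), the
Gaussian sum and its reciprocal satisfy `g^(2Nm) = g'^(2Nm)`. -/
theorem ModularDatum.gauss_pow_eq {K : Type*} [Field K] [CharZero K]
    {I : Type*} [Fintype I] [DecidableEq I] (d : ModularDatum K I)
    (N : ℕ) (hN : 0 < N) (hT : ∀ i, d.T i ^ N = 1) :
    d.gauss ^ (2 * N * Fintype.card I) = d.gauss' ^ (2 * N * Fintype.card I) := by
  classical
  obtain ⟨c, hc⟩ := d.proportional
  set m := Fintype.card I with hm
  have hTne : ∀ i, d.T i ≠ 0 := by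
    intro i h
    have h1 := hT i
    rw [h, zero_pow hN.ne'] at h1
    exact zero_ne_one h1
  -- the charge conjugation matrix
  set C : Matrix I I K := Matrix.of (fun i k => if i = d.star k then (1:K) else 0) with hCdef
  have hCC : C * C = 1 := by
    ext i j
    simp only [hCdef, Matrix.mul_apply, Matrix.of_apply, Matrix.one_apply]
    rw [Finset.sum_eq_single (d.star j)]
    · simp [d.star_involutive j, eq_comm]
    · intro b _ hb
      rw [if_neg hb, mul_zero]
    · intro h; exact absurd (Finset.mem_univ _) h
  have hSC : d.S * d.S = d.n • C := by
    ext i k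
    simp only [Matrix.mul_apply, Matrix.smul_apply, hCdef, Matrix.of_apply, smul_eq_mul]
    exact d.S_sq i k
  -- determinant facts
  have hD2 : d.S.det * d.S.det = d.n ^ m * C.det := by
    have h := congrArg Matrix.det hSC
    rwa [Matrix.det_mul, Matrix.det_smul] at h
  have hC2 : C.det * C.det = 1 := by
    have h := congrArg Matrix.det hCC
    rwa [Matrix.det_mul, Matrix.det_one] at h
  have hD4 : d.S.det ^ 4 = d.n ^ (2 * m) := by
    calc d.S.det ^ 4 = (d.S.det * d.S.det) * (d.S.det * d.S.det) := by ring
      _ = (d.n ^ m * d.n ^ m) * (C.det * C.det) := by rw [hD2]; ring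
      _ = d.n ^ (2 * m) := by rw [hC2, mul_one, ← pow_add, two_mul]
  -- the matrix form of the proportionality axiom
  have hmat : Matrix.diagonal (fun i => (d.T i)⁻¹) * d.S * Matrix.diagonal (fun i => (d.T i)⁻¹)
      = c • (d.S * Matrix.diagonal d.T * d.S) := by
    ext i j
    rw [Matrix.smul_apply, Matrix.mul_diagonal, Matrix.diagonal_mul, smul_eq_mul,
      Matrix.mul_apply]
    simp only [Matrix.mul_diagonal]
    exact hc i j
  set P : K := ∏ i, d.T i with hPdef
  have hPinv : (∏ i, (d.T i)⁻¹) = P⁻¹ := by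
    rw [hPdef, ← Finset.prod_inv_distrib]
  have hPne : P ≠ 0 := Finset.prod_ne_zero_iff.2 (fun i _ => hTne i)
  have hPN : P ^ N = 1 := by
    rw [hPdef, ← Finset.prod_pow]
    exact Finset.prod_eq_one (fun i _ => hT i)
  have hE : P⁻¹ * d.S.det * P⁻¹ = c ^ m * (d.S.det * P * d.S.det) := by
    have h := congrArg Matrix.det hmat
    rwa [Matrix.det_mul, Matrix.det_mul, Matrix.det_diagonal, Matrix.det_smul,
      Matrix.det_mul, Matrix.det_mul, Matrix.det_diagonal, hPinv] at h
  have hkey : d.S.det = c ^ m * (d.S.det ^ 2 * P ^ 3) := by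
    have h0 : d.S.det = P⁻¹ * d.S.det * P⁻¹ * P ^ 2 := by
      field_simp
    calc d.S.det = P⁻¹ * d.S.det * P⁻¹ * P ^ 2 := h0
      _ = c ^ m * (d.S.det * P * d.S.det) * P ^ 2 := by rw [hE]
      _ = c ^ m * (d.S.det ^ 2 * P ^ 3) := by ring
  -- Gaussian sum identity
  have hg : d.S d.o d.o = c * d.gauss * d.T d.o ^ 2 := by
    have h := hc d.o d.o
    have hsum : (∑ k, d.S d.o k * d.T k * d.S k d.o) = d.gauss := by
      unfold ModularDatum.gauss ModularDatum.ni
      apply Finset.sum_congr rfl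
      intro k _
      rw [d.S_symm d.o k]; ring
    rw [hsum] at h
    have h0 : d.S d.o d.o = d.T d.o * ((d.T d.o)⁻¹ * d.S d.o d.o * (d.T d.o)⁻¹) * d.T d.o := by
      field_simp [hTne d.o]
    rw [h0, h]; ring
  -- reciprocal Gaussian sum identity
  have hg' : d.gauss' = c * d.T d.o ^ 2 * d.n * d.S d.o d.o := by
    have step1 : d.gauss' = c * d.T d.o * ∑ i, ∑ k, d.ni i * (d.S i k * d.T k * d.S k d.o) := by
      unfold ModularDatum.gauss'
      rw [Finset.mul_sum]
      apply Finset.sum_congr rfl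
      intro i _
      have h := hc i d.o
      calc d.ni i ^ 2 * (d.T i)⁻¹
          = d.ni i * ((d.T i)⁻¹ * d.S i d.o * (d.T d.o)⁻¹) * d.T d.o := by
            unfold ModularDatum.ni
            field_simp [hTne i, hTne d.o]
        _ = d.ni i * (c * ∑ k, d.S i k * d.T k * d.S k d.o) * d.T d.o := by rw [h]
        _ = c * d.T d.o * ∑ k, d.ni i * (d.S i k * d.T k * d.S k d.o) := by
            simp only [Finset.mul_sum, Finset.sum_mul]
            exact Finset.sum_congr rfl (fun k _ => by ring)
    have step2 : (∑ i, ∑ k, d.ni i * (d.S i k * d.T k * d.S k d.o))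
        = d.T d.o * d.S d.o d.o * d.n := by
      rw [Finset.sum_comm]
      have inner : ∀ k, (∑ i, d.ni i * (d.S i k * d.T k * d.S k d.o))
          = (d.T k * d.S k d.o) * (d.n * (if d.o = d.star k then 1 else 0)) := by
        intro k
        rw [← d.S_sq d.o k, Finset.mul_sum]
        apply Finset.sum_congr rfl
        intro i _
        unfold ModularDatum.ni
        rw [d.S_symm i d.o]
        ring
      rw [Finset.sum_congr rfl (fun k _ => inner k)]
      rw [Finset.sum_eq_single d.o]
      · rw [if_pos d.star_o.symm]; ring
      · intro b _ hb
        rw [if_neg, mul_zero, mul_zero]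
        intro hob
        exact hb (by rw [← d.star_involutive b, ← hob, d.star_o])
      · intro h; exact absurd (Finset.mem_univ _) h
    rw [step1, step2]; ring
  -- combine
  have hfinal : d.gauss' = c ^ 2 * d.T d.o ^ 4 * d.n * d.gauss := by
    rw [hg', hg]; ring
  -- the unit factor is trivial when raised to the power 2*N*m
  have hc4 : c ^ (4 * N * m) * d.n ^ (2 * N * m) = 1 := by
    have h1 := congrArg (· ^ (4 * N)) hkey
    rw [mul_pow, mul_pow] at h1
    have e1 : d.S.det ^ (4 * N) = d.n ^ (2 * N * m) := by
      calc d.S.det ^ (4 * N) = (d.S.det ^ 4) ^ N := by rw [← pow_mul]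
        _ = (d.n ^ (2 * m)) ^ N := by rw [hD4]
        _ = d.n ^ (2 * N * m) := by rw [← pow_mul]; congr 1; ring
    have e2 : (c ^ m) ^ (4 * N) = c ^ (4 * N * m) := by
      rw [← pow_mul]; congr 1; ring
    have e3 : (d.S.det ^ 2) ^ (4 * N) = d.n ^ (2 * N * m) * d.n ^ (2 * N * m) := by
      calc (d.S.det ^ 2) ^ (4 * N) = (d.S.det ^ 4) ^ (2 * N) := by
            rw [← pow_mul, ← pow_mul]; congr 1; ring
        _ = (d.n ^ (2 * m)) ^ (2 * N) := by rw [hD4]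
        _ = d.n ^ (2 * N * m) * d.n ^ (2 * N * m) := by
            rw [← pow_mul, ← pow_add]; congr 1; ring
    have e4 : (P ^ 3) ^ (4 * N) = 1 := by
      rw [← pow_mul, show 3 * (4 * N) = N * 12 by ring, pow_mul, hPN, one_pow]
    rw [e1, e2, e3, e4, mul_one] at h1
    have hnne : d.n ^ (2 * N * m) ≠ 0 := pow_ne_zero _ d.n_ne
    have h2 : (c ^ (4 * N * m) * d.n ^ (2 * N * m)) * d.n ^ (2 * N * m)
        = 1 * d.n ^ (2 * N * m) := by
      rw [one_mul, mul_assoc]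
      exact h1.symm
    exact mul_right_cancel₀ hnne h2
  rw [hfinal, mul_pow, mul_pow, mul_pow]
  have hq1 : (c ^ 2) ^ (2 * N * m) = c ^ (4 * N * m) := by
    rw [← pow_mul]
    congr 1
    ring
  have hq2 : (d.T d.o ^ 4) ^ (2 * N * m) = 1 := by
    rw [← pow_mul, show 4 * (2 * N * m) = N * (8 * m) by ring, pow_mul, hT d.o, one_pow]
  rw [hq1, hq2, mul_one, hc4, one_mul]
end

section
/- For an integral modular datum whose Verlinde matrix entries and Dehn matrix entries lie in the cyclotomic field Q_N, the fusion symbol f(q) = σ_q(g)/g (for q coprime to N, where σ_q is the Galois automorphism raising N-th roots of unity to the q-th power and g is the Gaussian sum) satisfies f(q)^{2N} = 1; if N is even then f(q)^N = 1. -/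
open Finset Polynomial IntermediateField

private lemma totient_aux {M : ℕ} (hM : 0 < M) : ∀ l : ℕ, M ∣ l → Nat.totient l ∣ Nat.totient M →
    l ∣ Nat.lcm 2 M := by
  intro l
  induction l using Nat.strong_induction_on with
  | _ l ih =>
    intro hMl hphi
    have hl0 : l ≠ 0 := by
      rintro rfl
      rw [Nat.totient_zero] at hphi
      exact absurd (Nat.eq_zero_of_zero_dvd hphi) (Nat.totient_pos.2 hM).ne'
    rcases eq_or_ne l M with heq | hne
    · exact heq ▸ Nat.dvd_lcm_right 2 M
    · -- pick a prime dividing l / M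
      obtain ⟨k, rfl⟩ := hMl
      have hk1 : k ≠ 1 := by rintro rfl; simp at hne
      have hk0 : k ≠ 0 := by rintro rfl; simp at hl0
      obtain ⟨p, hp, hpk⟩ := Nat.exists_prime_and_dvd hk1
      obtain ⟨k', rfl⟩ := hpk
      set l' := M * k' with hl'
      have hMl' : M ∣ l' := Dvd.intro k' rfl
      have hll : M * (p * k') = p * l' := by ring
      have hl'0 : l' ≠ 0 := by
        intro h; rw [hll, h, mul_zero] at hl0; exact hl0 rfl
      have hphiM_l' : Nat.totient M ∣ Nat.totient l' := Nat.totient_dvd_of_dvd hMl'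
      have hphil'_l : Nat.totient l' ∣ Nat.totient (M * (p * k')) := by
        rw [hll]; exact Nat.totient_dvd_of_dvd (Dvd.intro_left p rfl)
      have hphil'M : Nat.totient l' = Nat.totient M :=
        Nat.dvd_antisymm (hphil'_l.trans hphi) hphiM_l'
      have hpos' : 0 < Nat.totient l' := Nat.totient_pos.2 (Nat.pos_of_ne_zero hl'0)
      by_cases hpl' : p ∣ l'
      · exfalso
        have heq : Nat.totient (M * (p * k')) = p * Nat.totient l' := by
          rw [hll, Nat.totient_mul_of_prime_of_dvd hp hpl']
        rw [heq, hphil'M] at hphi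
        have h2 : p * Nat.totient l' ∣ Nat.totient l' := by rwa [hphil'M]
        have h5 := Nat.le_of_dvd hpos' h2
        have h4 : 2 * Nat.totient l' ≤ p * Nat.totient l' :=
          Nat.mul_le_mul_right _ hp.two_le
        omega
      · have hcop : Nat.Coprime p l' := (Nat.Prime.coprime_iff_not_dvd hp).2 hpl'
        have heq : Nat.totient (M * (p * k')) = (p - 1) * Nat.totient l' := by
          rw [hll, Nat.totient_mul hcop, Nat.totient_prime hp]
        have hp2 : p = 2 := by
          by_contra hp2
          have h3 : 3 ≤ p := by rcases hp.two_le.lt_or_eq with h | h; omega; omega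
          rw [heq, hphil'M] at hphi
          have h2 : (p - 1) * Nat.totient l' ∣ Nat.totient l' := by rwa [hphil'M]
          have h5 := Nat.le_of_dvd hpos' h2
          have h4 : 2 * Nat.totient l' ≤ (p - 1) * Nat.totient l' :=
            Nat.mul_le_mul_right _ (by omega)
          omega
        subst hp2
        have hl'odd : ¬ 2 ∣ l' := hpl'
        have hModd : ¬ 2 ∣ M := fun h => hl'odd (h.trans hMl')
        have hihyp : l' ∣ Nat.lcm 2 M := by
          refine ih l' ?_ hMl' (by rw [hphil'M])
          have : 0 < l' := Nat.pos_of_ne_zero hl'0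
          calc l' < 2 * l' := by omega
            _ = M * (2 * k') := by rw [hll]
        have hcop2M : Nat.Coprime 2 M := (Nat.Prime.coprime_iff_not_dvd Nat.prime_two).2 hModd
        have hlcm : Nat.lcm 2 M = 2 * M := Nat.Coprime.lcm_eq_mul hcop2M
        have hl'M : l' ∣ M := by
          have hcopl'2 : Nat.Coprime l' 2 :=
            Nat.coprime_comm.1 ((Nat.Prime.coprime_iff_not_dvd Nat.prime_two).2 hl'odd)
          rw [hlcm] at hihyp
          exact (Nat.Coprime.dvd_of_dvd_mul_left hcopl'2 hihyp)
        rw [hll, hlcm]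
        exact mul_dvd_mul_left 2 hl'M

private lemma pow_lcm_eq_one {K : Type*} [Field K] [CharZero K] {M : ℕ} (hM : 0 < M) {ζ : K}
    (hζ : IsPrimitiveRoot ζ M) {x : K} (hx : x ∈ IntermediateField.adjoin ℚ {ζ})
    {k : ℕ} (hk : 0 < k) (hxk : x ^ k = 1) : x ^ Nat.lcm 2 M = 1 := by
  set L := IntermediateField.adjoin ℚ {ζ} with hL
  have hζint : IsIntegral ℚ ζ := (hζ.isIntegral hM).tower_top
  haveI : FiniteDimensional ℚ L := IntermediateField.adjoin.finiteDimensional hζint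
  haveI : CharZero L := charZero_of_injective_algebraMap (algebraMap ℚ L).injective
  set ζ' : L := ⟨ζ, IntermediateField.mem_adjoin_simple_self ℚ ζ⟩ with hζ'def
  have hζ' : IsPrimitiveRoot ζ' M := IsPrimitiveRoot.coe_submonoidClass_iff.mp (by exact hζ)
  set x' : L := ⟨x, hx⟩ with hx'def
  have hx'k : x' ^ k = 1 := by
    apply Subtype.ext
    simpa using hxk
  set k' := Nat.lcm k M with hk'
  haveI : NeZero k' := ⟨(Nat.pos_of_ne_zero (by
    simp [hk', Nat.lcm_ne_zero hk.ne' hM.ne'])).ne'⟩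
  have hx'k' : x' ^ k' = 1 := by
    obtain ⟨c, hc⟩ := Nat.dvd_lcm_left k M
    rw [hk', hc, pow_mul, hx'k, one_pow]
  have hζ'k' : ζ' ^ k' = 1 := by
    obtain ⟨c, hc⟩ := Nat.dvd_lcm_right k M
    rw [hk', hc, pow_mul, hζ'.pow_eq_one, one_pow]
  set xu : rootsOfUnity k' L := rootsOfUnity.mkOfPowEq x' hx'k' with hxu
  set ζu : rootsOfUnity k' L := rootsOfUnity.mkOfPowEq ζ' hζ'k' with hζu
  obtain ⟨y, hy⟩ := IsCyclic.exists_generator (α := rootsOfUnity k' L)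
  set l := orderOf y with hldef
  have hlpos : 0 < l := orderOf_pos y
  have hcard : orderOf y = Nat.card (rootsOfUnity k' L) :=
    orderOf_eq_card_of_forall_mem_zpowers hy
  have hordζu : orderOf ζu = M := by
    have h1 : orderOf ζu = orderOf ((ζu : Lˣ)) :=
      (orderOf_injective (rootsOfUnity k' L).subtype Subtype.coe_injective ζu).symm
    have h2 : orderOf ((ζu : Lˣ)) = orderOf (((ζu : Lˣ) : L)) := orderOf_units.symm
    have h3 : (((ζu : Lˣ)) : L) = ζ' := rootsOfUnity.coe_mkOfPowEq _
    rw [h1, h2, h3, ← hζ'.eq_orderOf]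
  have hMl : M ∣ l := by
    rw [← hordζu, hldef, hcard]
    exact orderOf_dvd_natCard ζu
  have hxl : x' ^ l = 1 := by
    have h4 : xu ^ l = 1 := by
      apply orderOf_dvd_iff_pow_eq_one.mp
      rw [hldef, hcard]
      exact orderOf_dvd_natCard xu
    have h5 := congrArg (fun u : rootsOfUnity k' L => (((u : Lˣ)) : L)) h4
    simpa [hxu, rootsOfUnity.coe_mkOfPowEq] using h5
  set yL : L := ((y : Lˣ) : L) with hyL
  have hordyL : orderOf yL = l := by
    have h2 : orderOf yL = orderOf (y : Lˣ) := orderOf_units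
    have h1 : orderOf ((rootsOfUnity k' L).subtype y) = orderOf y :=
      orderOf_injective _ Subtype.coe_injective y
    rw [h2, hldef, ← h1]; rfl
  have hyprim : IsPrimitiveRoot yL l := hordyL ▸ IsPrimitiveRoot.orderOf yL
  have hyint : IsIntegral ℚ yL := (hyprim.isIntegral hlpos).tower_top
  have hr1 : Module.finrank ℚ L = Nat.totient M := by
    have h6 := IntermediateField.adjoin.finrank hζint
    rw [← cyclotomic_eq_minpoly_rat hζ hM, natDegree_cyclotomic] at h6
    exact h6
  have hdvd : Nat.totient l ∣ Nat.totient M := by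
    have h6 := minpoly.degree_dvd hyint
    rw [← cyclotomic_eq_minpoly_rat hyprim hlpos, natDegree_cyclotomic, hr1] at h6
    exact h6
  obtain ⟨c, hc⟩ := totient_aux hM l hMl hdvd
  have hfin : x' ^ Nat.lcm 2 M = 1 := by rw [hc, pow_mul, hxl, one_pow]
  have := congrArg (Subtype.val) hfin
  simpa using this

/-- For an integral modular datum with exponent `N`, the fusion symbol
`f(q) = σ_q(g)/g = (Σ_i n_i² t_i^q)/g` (for `q` coprime to `N`) satisfies `f(q)^(2N) = 1`;
if moreover `N` is even, then `f(q)^N = 1`. -/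
theorem ModularDatum.fusion_symbol_pow {K : Type*} [Field K] [CharZero K]
    {I : Type*} [Fintype I] [DecidableEq I] (d : ModularDatum K I)
    (hint : ∀ i, ∃ m : ℕ, 0 < m ∧ d.ni i = (m : K))
    (N : ℕ) (hN : 0 < N) (hT : ∀ i, d.T i ^ N = 1)
    (q : ℕ) (hq : Nat.Coprime q N) :
    ((∑ i, d.ni i ^ 2 * d.T i ^ q) / d.gauss) ^ (2 * N) = 1 ∧
    (Even N → ((∑ i, d.ni i ^ 2 * d.T i ^ q) / d.gauss) ^ N = 1) := by
    classical
  haveI : NeZero N := ⟨hN.ne'⟩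
  choose mm hmpos hmval using hint
  have hTne : ∀ i, d.T i ≠ 0 := by
    intro i h
    have := hT i
    rw [h, zero_pow hN.ne'] at this
    exact zero_ne_one this
  set g := d.gauss with hgdef
  set gq := ∑ i, d.ni i ^ 2 * d.T i ^ q with hgqdef
  obtain ⟨c, hc⟩ := d.proportional
  set m := Fintype.card I with hmdef
  have hm0 : 0 < m := Fintype.card_pos_iff.mpr ⟨d.o⟩
  set SM := d.S with hSM
  set TM : Matrix I I K := Matrix.diagonal d.T with hTM
  set CM : Matrix I I K := Matrix.of fun i j => if i = d.star j then (1:K) else 0 with hCM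
  set t0 := d.T d.o with ht0def
  set mo := d.S d.o d.o with hmodef
  set b := ∏ i, d.T i with hbdef
  have hni : ∀ i, d.ni i ≠ 0 := fun i => d.S_io_ne i
  have hgS : ∀ k, d.S d.o k = d.ni k := fun k => d.S_symm d.o k
  -- matrix identities
  have h1 : SM * SM = d.n • CM := by
    ext i k
    simp only [Matrix.mul_apply, Matrix.smul_apply, Matrix.of_apply, smul_eq_mul, hSM, hCM]
    exact d.S_sq i k
  have hC : CM * CM = 1 := by
    ext i k
    simp only [Matrix.mul_apply, Matrix.of_apply, hCM]
    have hrw : ∀ j, (if i = d.star j then (1:K) else 0) * (if j = d.star k then 1 else 0)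
        = if j = d.star k then (if i = d.star j then (1:K) else 0) else 0 := by
      intro j; split <;> simp
    rw [Finset.sum_congr rfl fun j _ => hrw j, Finset.sum_ite_eq' Finset.univ (d.star k)]
    simp only [Finset.mem_univ, if_true, d.star_involutive k, Matrix.one_apply]
  -- determine c
  have hsum_oo : ∑ k, d.S d.o k * d.T k * d.S k d.o = g := by
    rw [hgdef, ModularDatum.gauss]
    refine Finset.sum_congr rfl fun k _ => ?_
    rw [hgS k]
    show d.ni k * d.T k * d.ni k = d.ni k ^ 2 * d.T k
    ring
  have hco : (d.T d.o)⁻¹ * d.S d.o d.o * (d.T d.o)⁻¹ = c * g := by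
    rw [hc d.o d.o, hsum_oo]
  have hcgne : c * g ≠ 0 := by
    rw [← hco]
    exact mul_ne_zero (mul_ne_zero (inv_ne_zero (hTne d.o)) (d.S_io_ne d.o))
      (inv_ne_zero (hTne d.o))
  have hcne : c ≠ 0 := fun h => hcgne (by rw [h, zero_mul])
  have hgne : g ≠ 0 := fun h => hcgne (by rw [h, mul_zero])
  have hSTS : ∀ i l, (∑ k, d.S i k * d.T k * d.S k l)
      = c⁻¹ * ((d.T i)⁻¹ * d.S i l * (d.T l)⁻¹) := by
    intro i l
    rw [hc i l, inv_mul_cancel_left₀ hcne]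
  have h2 : SM * TM * SM * TM * SM * TM = (c⁻¹ * d.n) • CM := by
    have hassoc : SM * TM * SM * TM * SM * TM = (SM * TM * SM) * (TM * (SM * TM)) := by
      simp only [mul_assoc]
    rw [hassoc]
    ext i j
    have hA : ∀ l, (SM * TM * SM) i l = c⁻¹ * ((d.T i)⁻¹ * d.S i l * (d.T l)⁻¹) := by
      intro l
      rw [Matrix.mul_apply, ← hSTS i l]
      refine Finset.sum_congr rfl fun k _ => ?_
      rw [Matrix.mul_diagonal]
    have hB : ∀ l, (TM * (SM * TM)) l j = d.T l * (d.S l j * d.T j) := by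
      intro l
      rw [Matrix.diagonal_mul, Matrix.mul_diagonal]
    rw [Matrix.mul_apply]
    simp only [hA, hB]
    have hrw : ∀ l, c⁻¹ * ((d.T i)⁻¹ * d.S i l * (d.T l)⁻¹) * (d.T l * (d.S l j * d.T j))
        = c⁻¹ * (d.T i)⁻¹ * d.T j * (d.S i l * d.S l j) := by
      intro l
      have h' : (d.T l)⁻¹ * d.T l = 1 := inv_mul_cancel₀ (hTne l)
      calc c⁻¹ * ((d.T i)⁻¹ * d.S i l * (d.T l)⁻¹) * (d.T l * (d.S l j * d.T j))
          = c⁻¹ * (d.T i)⁻¹ * d.T j * (d.S i l * d.S l j) * ((d.T l)⁻¹ * d.T l) := by ring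
        _ = c⁻¹ * (d.T i)⁻¹ * d.T j * (d.S i l * d.S l j) := by rw [h', mul_one]
    rw [Finset.sum_congr rfl fun l _ => hrw l, ← Finset.mul_sum, d.S_sq i j]
    simp only [Matrix.smul_apply, Matrix.of_apply, smul_eq_mul, hCM]
    by_cases hij : i = d.star j
    · have hTij : d.T i = d.T j := by rw [hij, d.T_star]
      simp only [if_pos hij]
      rw [hTij]
      have h'' : (d.T j)⁻¹ * d.T j = 1 := inv_mul_cancel₀ (hTne j)
      linear_combination (c⁻¹ * d.n) * h''
    · simp only [if_neg hij]
      ring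
  -- determinants
  set a := SM.det with hadef
  set ε := CM.det with hεdef
  have hdet1 : a ^ 2 = d.n ^ m * ε := by
    have := congrArg Matrix.det h1
    rwa [Matrix.det_mul, Matrix.det_smul, ← sq] at this
  have hdetC : ε * ε = 1 := by
    have := congrArg Matrix.det hC
    rwa [Matrix.det_mul, Matrix.det_one] at this
  have hdet2 : a ^ 3 * b ^ 3 = (c⁻¹ * d.n) ^ m * ε := by
    have h3 := congrArg Matrix.det h2
    rw [Matrix.det_smul, Matrix.det_mul, Matrix.det_mul, Matrix.det_mul, Matrix.det_mul,
      Matrix.det_mul, Matrix.det_diagonal] at h3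
    rw [← h3]; ring
  have hεv : ε = 1 ∨ ε = -1 := mul_self_eq_one_iff.mp hdetC
  have hεne : ε ≠ 0 := by rcases hεv with h | h <;> rw [h] <;> norm_num
  have h6a : a ^ 6 * b ^ 6 = (c⁻¹) ^ (2*m) * d.n ^ (2*m) := by
    calc a ^ 6 * b ^ 6 = (a ^ 3 * b ^ 3) ^ 2 := by ring
      _ = ((c⁻¹ * d.n) ^ m * ε) ^ 2 := by rw [hdet2]
      _ = (c⁻¹) ^ (2*m) * d.n ^ (2*m) * (ε * ε) := by ring
      _ = (c⁻¹) ^ (2*m) * d.n ^ (2*m) := by rw [hdetC, mul_one]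
  have h7 : a ^ 6 = d.n ^ (3*m) * ε := by
    calc a ^ 6 = (a ^ 2) ^ 3 := by ring
      _ = (d.n ^ m * ε) ^ 3 := by rw [hdet1]
      _ = d.n ^ (3*m) * (ε * ε) * ε := by ring
      _ = d.n ^ (3*m) * ε := by rw [hdetC]; try rw [mul_one]
  have hcomb : d.n ^ (3*m) * ε * b ^ 6 = (c⁻¹) ^ (2*m) * d.n ^ (2*m) := by
    rw [← h6a, ← h7]
  have hmoeq : mo = c * g * t0 ^ 2 := by
    have h4 := hco
    field_simp [hTne d.o] at h4
    rw [hmodef]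
    linear_combination h4
  have hckey : c ^ (2*m) * g ^ (2*m) * t0 ^ (4*m) = mo ^ (2*m) := by
    have h4 := congrArg (fun z : K => z ^ (2*m)) hmoeq
    rw [h4]; ring
  have hcc : (c⁻¹) ^ (2*m) * c ^ (2*m) = 1 := by
    rw [← mul_pow, inv_mul_cancel₀ hcne, one_pow]
  have hstar : g ^ (2*m) * t0 ^ (4*m) = ε * d.n ^ m * mo ^ (2*m) * b ^ 6 := by
    have hmain : d.n ^ (2*m) * (g ^ (2*m) * t0 ^ (4*m))
        = d.n ^ (2*m) * (ε * d.n ^ m * mo ^ (2*m) * b ^ 6) := by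
      calc d.n ^ (2*m) * (g ^ (2*m) * t0 ^ (4*m))
          = ((c⁻¹) ^ (2*m) * c ^ (2*m)) * d.n ^ (2*m) * (g ^ (2*m) * t0 ^ (4*m)) := by
            rw [hcc, one_mul]
        _ = ((c⁻¹) ^ (2*m) * d.n ^ (2*m)) * (c ^ (2*m) * g ^ (2*m) * t0 ^ (4*m)) := by ring
        _ = (d.n ^ (3*m) * ε * b ^ 6) * mo ^ (2*m) := by rw [← hcomb, hckey]
        _ = d.n ^ (2*m) * (ε * d.n ^ m * mo ^ (2*m) * b ^ 6) := by
            rw [show 3*m = 2*m + m by ring, pow_add]; ring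
    exact mul_left_cancel₀ (pow_ne_zero _ d.n_ne) hmain
  -- roots of unity and a primitive root
  obtain ⟨y0, hy0⟩ := IsCyclic.exists_generator (α := rootsOfUnity N K)
  set ζu : Kˣ := (y0 : Kˣ) with hζudef
  set ζ : K := ((ζu : Kˣ) : K) with hζdef
  set M := orderOf ζu with hMdef
  have hζNu : ζu ^ N = 1 := by
    have h8 := y0.2
    rwa [mem_rootsOfUnity] at h8
  have hMpos : 0 < M := by
    rw [hMdef]
    exact (isOfFinOrder_iff_pow_eq_one.mpr ⟨N, hN, hζNu⟩).orderOf_pos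
  have hMN : M ∣ N := orderOf_dvd_of_pow_eq_one hζNu
  have hordζ : orderOf ζ = M := by rw [hζdef, hMdef, orderOf_units]
  have hζprim : IsPrimitiveRoot ζ M := hordζ ▸ IsPrimitiveRoot.orderOf ζ
  have hqM : Nat.Coprime q M := Nat.Coprime.coprime_dvd_right hMN hq
  have hTmem : ∀ i, ∃ ei : ℕ, d.T i = ζ ^ ei := by
    intro i
    obtain ⟨z, hz⟩ := Subgroup.mem_zpowers_iff.mp (hy0 (rootsOfUnity.mkOfPowEq (d.T i) (hT i)))
    have hz' : ζu ^ z = ((rootsOfUnity.mkOfPowEq (d.T i) (hT i) : rootsOfUnity N K) : Kˣ) := by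
      have h8 := congrArg (fun w : rootsOfUnity N K => ((w : Kˣ) : K)) hz
      ext
      simpa using h8
    refine ⟨(z % (M:ℤ)).toNat, ?_⟩
    have h5 : ζu ^ ((z % (M:ℤ)).toNat : ℤ) = ζu ^ z := by
      rw [Int.toNat_of_nonneg (Int.emod_nonneg z (by exact_mod_cast hMpos.ne'))]
      rw [hMdef]
      exact zpow_mod_orderOf ζu z
    have h6 := congrArg (fun u : Kˣ => (u : K)) (h5.trans hz')
    simp only [zpow_natCast, rootsOfUnity.coe_mkOfPowEq, Units.val_pow_eq_pow_val] at h6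
    exact h6.symm
  choose e he using hTmem
  -- numeric data
  have hnn : d.n = ((∑ i, (mm i)^2 : ℕ) : K) := by
    have h8 := d.S_sq d.o d.o
    rw [if_pos d.star_o.symm, mul_one] at h8
    rw [← h8]
    push_cast
    refine Finset.sum_congr rfl fun j _ => ?_
    have hj : d.S j d.o = (mm j : K) := hmval j
    rw [hgS j, hmval j, hj]
    ring
  have hmoK : mo = (mm d.o : K) := by
    rw [hmodef]
    exact hmval d.o
  set r : ℚ := (if ε = 1 then 1 else -1) * ((∑ i, (mm i)^2 : ℕ) : ℚ)^m * ((mm d.o : ℚ))^(2*m)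
    with hrdef
  have hrK : algebraMap ℚ K r = ε * d.n ^ m * mo ^ (2*m) := by
    rw [hrdef]
    rcases hεv with h | h
    · rw [if_pos h, h, hnn, hmoK]
      rw [map_mul, map_mul, map_one, map_pow, map_pow, map_natCast, map_natCast]
    · rw [if_neg (by rw [h]; norm_num), h, hnn, hmoK]
      rw [map_mul, map_mul, map_pow, map_pow, map_natCast, map_natCast]
      norm_num
  set P : Polynomial ℚ := (∑ i, Polynomial.C ((mm i : ℚ)^2) * Polynomial.X ^ (e i)) ^ (2*m)
      * Polynomial.X ^ (4*m*(e d.o)) - Polynomial.C r * Polynomial.X ^ (6 * ∑ i, e i) with hPdef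
  have haev : ∀ w : K, Polynomial.aeval w P
      = (∑ i, (mm i : K)^2 * w ^ (e i))^(2*m) * w^(4*m*(e d.o))
        - (algebraMap ℚ K r) * w^(6 * ∑ i, e i) := by
    intro w
    rw [hPdef]
    simp only [map_sub, map_mul, map_pow, map_sum, Polynomial.aeval_X, Polynomial.aeval_C,
      Polynomial.C_pow, map_natCast]
  have hsumζ : (∑ i, (mm i : K)^2 * ζ ^ (e i)) = g := by
    rw [hgdef, ModularDatum.gauss]
    exact Finset.sum_congr rfl fun i _ => by rw [← hmval i, ← he i]
  have hbζ : ζ ^ (∑ i, e i) = b := by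
    rw [hbdef, ← Finset.prod_pow_eq_pow_sum]
    exact Finset.prod_congr rfl fun i _ => (he i).symm
  have hζ4m : ζ ^ (4*m*(e d.o)) = t0 ^ (4*m) := by
    rw [show 4*m*(e d.o) = (e d.o)*(4*m) by ring, pow_mul, ← he d.o, ← ht0def]
  have hζ6 : ζ ^ (6 * ∑ i, e i) = b ^ 6 := by
    rw [show 6 * ∑ i, e i = (∑ i, e i)*6 by ring, pow_mul, hbζ]
  have hζq4m : (ζ^q) ^ (4*m*(e d.o)) = (t0 ^ q) ^ (4*m) := by
    calc (ζ^q) ^ (4*m*(e d.o)) = ζ ^ (q*(4*m*(e d.o))) := by rw [← pow_mul]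
      _ = (ζ ^ (e d.o)) ^ (q*(4*m)) := by
          rw [show q*(4*m*(e d.o)) = (e d.o)*(q*(4*m)) by ring, pow_mul]
      _ = (t0 ^ q) ^ (4*m) := by rw [← he d.o, ← ht0def, pow_mul]
  have hζq6 : (ζ^q) ^ (6 * ∑ i, e i) = (b ^ q) ^ 6 := by
    calc (ζ^q) ^ (6 * ∑ i, e i) = ζ ^ (q*(6 * ∑ i, e i)) := by rw [← pow_mul]
      _ = (ζ ^ (∑ i, e i)) ^ (q*6) := by
          rw [show q*(6 * ∑ i, e i) = (∑ i, e i)*(q*6) by ring, pow_mul]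
      _ = (b ^ q) ^ 6 := by rw [hbζ, pow_mul]
  have hPζ : Polynomial.aeval ζ P = 0 := by
    rw [haev ζ, hsumζ, hrK, hζ4m, hζ6, hstar]
    ring
  have hPζq : Polynomial.aeval (ζ ^ q) P = 0 := by
    obtain ⟨Q, hQ⟩ := minpoly.dvd ℚ ζ hPζ
    rw [hQ, map_mul]
    have hz : Polynomial.aeval (ζ ^ q) (minpoly ℚ ζ) = 0 := by
      rw [← cyclotomic_eq_minpoly_rat hζprim hMpos]
      have h9 := (hζprim.pow_of_coprime q hqM).isRoot_cyclotomic hMpos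
      rwa [Polynomial.IsRoot.def, ← Polynomial.map_cyclotomic M (algebraMap ℚ K),
        Polynomial.eval_map, ← Polynomial.aeval_def] at h9
    rw [hz, zero_mul]
  have hsumζq : (∑ i, (mm i : K)^2 * (ζ ^ q) ^ (e i)) = gq := by
    rw [hgqdef]
    refine Finset.sum_congr rfl fun i _ => ?_
    rw [← hmval i, ← pow_mul, mul_comm q (e i), pow_mul, ← he i]
  have hstarq : gq ^ (2*m) * (t0 ^ q) ^ (4*m) = ε * d.n ^ m * mo ^ (2*m) * (b ^ q) ^ 6 := by
    have h0 := hPζq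
    rw [haev (ζ^q), hsumζq, hrK, hζq4m, hζq6] at h0
    exact sub_eq_zero.mp h0
  have hbne : b ≠ 0 := by
    rw [hbdef]
    exact Finset.prod_ne_zero_iff.mpr fun i _ => hTne i
  have hmone : mo ≠ 0 := by
    rw [hmoK]
    exact_mod_cast (hmpos d.o).ne'
  have hgqne : gq ≠ 0 := by
    intro h0
    have h9 := hstarq
    rw [h0, zero_pow (Nat.mul_ne_zero two_ne_zero hm0.ne'), zero_mul] at h9
    exact (mul_ne_zero (mul_ne_zero (mul_ne_zero hεne (pow_ne_zero _ d.n_ne))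
      (pow_ne_zero _ hmone)) (pow_ne_zero _ (pow_ne_zero _ hbne))) h9.symm
  have hbN : b ^ N = 1 := by
    rw [hbdef, ← Finset.prod_pow]
    exact Finset.prod_eq_one fun i _ => hT i
  have ht0N : t0 ^ N = 1 := hT d.o
  have hdagger : gq ^ (2*m) * (t0 ^ q) ^ (4*m) * b ^ 6
      = g ^ (2*m) * t0 ^ (4*m) * (b ^ q) ^ 6 := by
    rw [hstarq, hstar]
    ring
  have key : gq ^ (2*m*N) = g ^ (2*m*N) := by
    have h0 := congrArg (fun z : K => z ^ N) hdagger
    rw [mul_pow, mul_pow, mul_pow, mul_pow] at h0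
    have hone : ∀ (x : K) (k : ℕ), x ^ N = 1 → N ∣ k → x ^ k = 1 := by
      rintro x k hx ⟨c0, rfl⟩
      rw [pow_mul, hx, one_pow]
    have ea : ((t0 ^ q) ^ (4*m)) ^ N = 1 := by
      rw [← pow_mul, ← pow_mul]; exact hone t0 _ ht0N ⟨q*(4*m), by ring⟩
    have eb : (b ^ 6) ^ N = 1 := by
      rw [← pow_mul]; exact hone b _ hbN ⟨6, by ring⟩
    have ec : (t0 ^ (4*m)) ^ N = 1 := by
      rw [← pow_mul]; exact hone t0 _ ht0N ⟨4*m, by ring⟩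
    have ed : ((b ^ q) ^ 6) ^ N = 1 := by
      rw [← pow_mul, ← pow_mul]; exact hone b _ hbN ⟨q*6, by ring⟩
    rw [ea, eb, ec, ed, mul_one, mul_one, mul_one, mul_one, ← pow_mul, ← pow_mul] at h0
    exact h0
  have hζmem : ζ ∈ IntermediateField.adjoin ℚ {ζ} :=
    IntermediateField.mem_adjoin_simple_self ℚ ζ
  have hgmem : g ∈ IntermediateField.adjoin ℚ {ζ} := by
    rw [hgdef, ModularDatum.gauss]
    refine sum_mem fun i _ => ?_
    rw [hmval i, he i]
    exact mul_mem (pow_mem (_root_.natCast_mem _ _) 2) (pow_mem hζmem _)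
  have hgqmem : gq ∈ IntermediateField.adjoin ℚ {ζ} := by
    rw [hgqdef]
    refine sum_mem fun i _ => ?_
    rw [hmval i, he i]
    exact mul_mem (pow_mem (_root_.natCast_mem _ _) 2) (pow_mem (pow_mem hζmem _) q)
  have hXmem : gq / g ∈ IntermediateField.adjoin ℚ {ζ} := div_mem hgqmem hgmem
  have hXpow : (gq / g) ^ (2*m*N) = 1 := by
    rw [div_pow, key, div_self (pow_ne_zero _ hgne)]
  have hlcm := pow_lcm_eq_one hMpos hζprim hXmem
    (Nat.mul_pos (Nat.mul_pos two_pos hm0) hN) hXpow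
  constructor
  · obtain ⟨c2, hc2⟩ := Nat.lcm_dvd (⟨N, rfl⟩ : (2:ℕ) ∣ 2*N) (hMN.trans (dvd_mul_left N 2))
    rw [hc2, pow_mul, hlcm, one_pow]
  · intro hev
    obtain ⟨c2, hc2⟩ := Nat.lcm_dvd hev.two_dvd hMN
    rw [hc2, pow_mul, hlcm, one_pow]
end

section
/- For the semion datum with Verlinde matrix S = [[1,1],[1,-1]] and Dehn matrix T = diag(1, i) over C, there exist no nonzero complex numbers D, ℓ such that the matrices S' = S/D and T' = T/ℓ satisfy S'⁴ = E, T'⁴ = E, and (T'S')³ = S'². That is, the projective representation of SL(2,Z/4) determined by S and T cannot be lifted to a linear representation of SL(2,Z/4). -/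
open Complex

/-- The Verlinde matrix of the semion datum. -/
noncomputable def semionS : Matrix (Fin 2) (Fin 2) ℂ := !![1, 1; 1, -1]

/-- The Dehn matrix of the semion datum. -/
noncomputable def semionT : Matrix (Fin 2) (Fin 2) ℂ := !![1, 0; 0, I]

/-- For the semion datum there exist no nonzero complex numbers `D`, `ℓ` such that
`S' = S/D` and `T' = T/ℓ` satisfy `S'⁴ = E`, `T'⁴ = E` and `(T'S')³ = S'²`: the projective
representation of `SL(2,ℤ/4)` determined by `S` and `T` cannot be lifted to a linear
representation. -/
theorem semion_no_lift :
    ¬ ∃ D ℓ : ℂ, D ≠ 0 ∧ ℓ ≠ 0 ∧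
      (D⁻¹ • semionS) ^ 4 = 1 ∧ (ℓ⁻¹ • semionT) ^ 4 = 1 ∧
      ((ℓ⁻¹ • semionT) * (D⁻¹ • semionS)) ^ 3 = (D⁻¹ • semionS) ^ 2 := by
  rintro ⟨D, ℓ, hD, hℓ, h1, h2, h3⟩
  have e1 := congrFun (congrFun h1 0) 0
  have e2 := congrFun (congrFun h2 1) 1
  have e3 := congrFun (congrFun h3 0) 0
  simp [semionS, semionT, pow_succ, Matrix.mul_apply, Fin.sum_univ_two,
    Matrix.smul_apply, Matrix.one_apply, smul_eq_mul] at e1 e2 e3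
  ring_nf at e1 e2 e3
  have hl4 : ℓ⁻¹ ^ 4 = 1 := by
    have hI4 : Complex.I ^ 4 = 1 := by
      linear_combination (Complex.I ^ 2 - 1) * Complex.I_sq
    rw [hI4, mul_one] at e2
    exact e2
  have h14 : ((1 : ℂ) + I) ^ 4 = -4 := by
    linear_combination (Complex.I ^ 2 + 4 * Complex.I + 5) * Complex.I_sq
  have h5 : D⁻¹ ^ 2 * (D⁻¹ * ℓ⁻¹ ^ 3 * (1 + I)) = D⁻¹ ^ 2 * 1 := by
    linear_combination e3 / 2 + D⁻¹ ^ 3 * ℓ⁻¹ ^ 3 / 2 * Complex.I_sq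
  have h6 : D⁻¹ * ℓ⁻¹ ^ 3 * (1 + I) = 1 :=
    mul_left_cancel₀ (pow_ne_zero 2 (inv_ne_zero hD)) h5
  have h9 : D⁻¹ ^ 4 * (-4) = 1 := by
    linear_combination
      ((D⁻¹ * ℓ⁻¹ ^ 3 * (1 + I)) ^ 3 + (D⁻¹ * ℓ⁻¹ ^ 3 * (1 + I)) ^ 2 +
        (D⁻¹ * ℓ⁻¹ ^ 3 * (1 + I)) + 1) * h6
      - D⁻¹ ^ 4 * ℓ⁻¹ ^ 12 * h14
      + 4 * D⁻¹ ^ 4 * (ℓ⁻¹ ^ 8 + ℓ⁻¹ ^ 4 + 1) * hl4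
  have h10 : (2 : ℂ) = 0 := by linear_combination -h9 - e1
  exact two_ne_zero h10
end
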